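/- arXiv:2112.11196 — 10 statements merged into one kernel-verified Lean document; each statement's English description precedes it below -/
import Mathlib

section
/- Let I = [x₀, x_N] be a compact interval with partition x₀ < x₁ < ... < x_N, and let L_i(x) = a_i x + e_i with a_i = (x_i - x_{i-1})/(x_N - x₀) be the affine maps sending [x₀,x_N] onto [x_{i-1},x_i]. Let f, b : I → ℝ be continuous with b(x₀) = f(x₀), b(x_N) = f(x_N), let α = (α₁,...,α_N) with |α_i| < 1, and let f^α : I → ℝ be the unique continuous function satisfying the self-referential equation f^α(x) = f(x) + α_i (f^α − b)(L_i^{-1}(x)) for x ∈ [x_{i-1}, x_i], i = 1,...,N. Then ∫_{x₀}^{x_N} f^α(x) dx = (1/(1−λ)) ∫_{x₀}^{x_N} f(x) dx − (λ/(1−λ)) ∫_{x₀}^{x_N} b(x) dx, where λ = Σ_{i=1}^N a_i α_i (assuming λ ≠ 1). -/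
/-- Slope of the increasing affine map `L i` sending `[x 0, x N]` onto `[x (i-1), x i]`. -/
noncomputable def aCoef (x : ℕ → ℝ) (N i : ℕ) : ℝ := (x i - x (i - 1)) / (x N - x 0)

/-- Intercept of `L i`. -/
noncomputable def eCoef (x : ℕ → ℝ) (N i : ℕ) : ℝ :=
  (x N * x (i - 1) - x 0 * x i) / (x N - x 0)

/-- Inverse of `L i t = aCoef * t + eCoef`. -/
noncomputable def Linv (x : ℕ → ℝ) (N i : ℕ) (t : ℝ) : ℝ :=
  (t - eCoef x N i) / aCoef x N i

theorem integral_alpha_fractal (N : ℕ) (hN : 1 ≤ N) (x : ℕ → ℝ)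
    (hx : ∀ i, i < N → x i < x (i + 1))
    (f b fα : ℝ → ℝ)
    (hf : ContinuousOn f (Set.Icc (x 0) (x N)))
    (hb : ContinuousOn b (Set.Icc (x 0) (x N)))
    (hfα : ContinuousOn fα (Set.Icc (x 0) (x N)))
    (hb0 : b (x 0) = f (x 0)) (hbN : b (x N) = f (x N))
    (α : ℕ → ℝ) (hα : ∀ i ∈ Finset.Icc 1 N, |α i| < 1)
    (hself : ∀ i ∈ Finset.Icc 1 N, ∀ t ∈ Set.Icc (x (i - 1)) (x i),
      fα t = f t + α i * (fα (Linv x N i t) - b (Linv x N i t)))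
    (Λ : ℝ) (hΛdef : Λ = ∑ i ∈ Finset.Icc 1 N, aCoef x N i * α i)
    (hΛ : Λ ≠ 1) :
    ∫ t in (x 0)..(x N), fα t =
      (1 / (1 - Λ)) * (∫ t in (x 0)..(x N), f t)
        - (Λ / (1 - Λ)) * ∫ t in (x 0)..(x N), b t := by
  -- monotonicity of the partition
  have hmono : ∀ j, j ≤ N → ∀ i, i ≤ j → x i ≤ x j := by
    intro j
    induction j with
    | zero => intro _ i hi; interval_cases i; exact le_rfl
    | succ k ih =>
      intro hk i hi
      rcases Nat.eq_or_lt_of_le hi with h | h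
      · rw [h]
      · exact le_trans (ih (le_of_lt (Nat.lt_of_lt_of_le (Nat.lt_succ_self k) hk)) i
          (Nat.lt_succ_iff.mp h)) (le_of_lt (hx k (Nat.lt_of_lt_of_le (Nat.lt_succ_self k) hk)))
  have h0N : x 0 < x N := by
    calc x 0 < x 1 := hx 0 hN
    _ ≤ x N := hmono N le_rfl 1 hN
  have hd : x N - x 0 ≠ 0 := by linarith
  -- interval endpoints maps
  have hsub : ∀ i ∈ Finset.Icc 1 N, Set.Icc (x (i-1)) (x i) ⊆ Set.Icc (x 0) (x N) := by
    intro i hi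
    rw [Finset.mem_Icc] at hi
    exact Set.Icc_subset_Icc (hmono (i-1) (le_trans (Nat.sub_le i 1) hi.2) 0 (Nat.zero_le _))
      (hmono N le_rfl i hi.2)
  -- per-interval key identity
  have hstep : ∀ i ∈ Finset.Icc 1 N,
      (∫ t in (x (i-1))..(x i), fα t) = (∫ t in (x (i-1))..(x i), f t)
        + aCoef x N i * α i * ((∫ t in (x 0)..(x N), fα t) - ∫ t in (x 0)..(x N), b t) := by
    intro i hi
    rw [Finset.mem_Icc] at hi
    have hii : x (i-1) < x i := by
      have := hx (i-1) (Nat.lt_of_lt_of_le (Nat.sub_lt (Nat.lt_of_lt_of_le Nat.one_pos hi.1) Nat.one_pos) hi.2)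
      rwa [Nat.sub_add_cancel hi.1] at this
    have ha' : (0:ℝ) < aCoef x N i := by
      unfold aCoef; apply div_pos <;> linarith
    have ha : aCoef x N i ≠ 0 := ne_of_gt ha'
    have hne : x i - x (i-1) ≠ 0 := by linarith
    -- Linv maps endpoints
    have hL0 : Linv x N i (x (i-1)) = x 0 := by
      unfold Linv eCoef aCoef
      field_simp
      ring
    have hLN : Linv x N i (x i) = x N := by
      unfold Linv eCoef aCoef
      field_simp
      ring
    have hLmaps : ∀ t ∈ Set.Icc (x (i-1)) (x i), Linv x N i t ∈ Set.Icc (x 0) (x N) := by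
      intro t ht
      have hLmono : MonotoneOn (Linv x N i) (Set.Icc (x (i-1)) (x i)) := by
        intro u hu v hv huv
        unfold Linv
        exact (div_le_div_iff_of_pos_right ha').mpr (by linarith)
      constructor
      · rw [← hL0]; exact hLmono ⟨le_rfl, le_of_lt hii⟩ ht ht.1
      · rw [← hLN]; exact hLmono ht ⟨le_of_lt hii, le_rfl⟩ ht.2
    -- continuity of composed functions on the subinterval
    have hLc : ContinuousOn (Linv x N i) (Set.Icc (x (i-1)) (x i)) := by
      unfold Linv; fun_prop
    have hgc : ContinuousOn (fun t => fα (Linv x N i t) - b (Linv x N i t))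
        (Set.Icc (x (i-1)) (x i)) := by
      exact ((hfα.comp hLc hLmaps).sub (hb.comp hLc hLmaps))
    have huIcc : Set.uIcc (x (i-1)) (x i) = Set.Icc (x (i-1)) (x i) :=
      Set.uIcc_of_le (le_of_lt hii)
    have huIcc0 : Set.uIcc (x 0) (x N) = Set.Icc (x 0) (x N) :=
      Set.uIcc_of_le (le_of_lt h0N)
    -- rewrite fα on the interval
    have hcongr : (∫ t in (x (i-1))..(x i), fα t)
        = ∫ t in (x (i-1))..(x i), (f t + α i * (fα (Linv x N i t) - b (Linv x N i t))) := by
      apply intervalIntegral.integral_congr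
      intro t ht
      rw [huIcc] at ht
      exact hself i (Finset.mem_Icc.mpr hi) t ht
    rw [hcongr]
    have hfint : IntervalIntegrable f MeasureTheory.volume (x (i-1)) (x i) :=
      (hf.mono (by rw [huIcc]; exact hsub i (Finset.mem_Icc.mpr hi))).intervalIntegrable
    have hgint : IntervalIntegrable (fun t => α i * (fα (Linv x N i t) - b (Linv x N i t)))
        MeasureTheory.volume (x (i-1)) (x i) := by
      apply ContinuousOn.intervalIntegrable
      rw [huIcc]
      exact continuousOn_const.mul hgc
    rw [intervalIntegral.integral_add hfint hgint]
    congr 1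
    rw [intervalIntegral.integral_const_mul]
    -- change of variables
    have hLform : ∀ t, Linv x N i t = t / aCoef x N i + (- eCoef x N i / aCoef x N i) := by
      intro t; unfold Linv; ring
    have : (∫ t in (x (i-1))..(x i), (fα (Linv x N i t) - b (Linv x N i t)))
        = aCoef x N i • ∫ u in (x 0)..(x N), (fα u - b u) := by
      calc (∫ t in (x (i-1))..(x i), (fα (Linv x N i t) - b (Linv x N i t)))
          = ∫ t in (x (i-1))..(x i),
              (fun u => fα u - b u) (t / aCoef x N i + (- eCoef x N i / aCoef x N i)) := by
            apply intervalIntegral.integral_congr; intro t _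
            show fα (Linv x N i t) - b (Linv x N i t) =
              fα (t / aCoef x N i + -eCoef x N i / aCoef x N i)
                - b (t / aCoef x N i + -eCoef x N i / aCoef x N i)
            rw [← hLform]
        _ = aCoef x N i • ∫ u in (Linv x N i (x (i-1)))..(Linv x N i (x i)), (fα u - b u) := by
            rw [intervalIntegral.integral_comp_div_add (fun u => fα u - b u) ha]
            rw [← hLform (x (i-1)), ← hLform (x i)]
        _ = aCoef x N i • ∫ u in (x 0)..(x N), (fα u - b u) := by rw [hL0, hLN]
    rw [this]
    have hfαint : IntervalIntegrable fα MeasureTheory.volume (x 0) (x N) :=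
      (hfα.mono (by rw [huIcc0])).intervalIntegrable
    have hbint : IntervalIntegrable b MeasureTheory.volume (x 0) (x N) :=
      (hb.mono (by rw [huIcc0])).intervalIntegrable
    rw [intervalIntegral.integral_sub hfαint hbint]
    simp [smul_eq_mul]; ring
  -- sum over the partition
  have hsum : ∀ g : ℝ → ℝ, ContinuousOn g (Set.Icc (x 0) (x N)) →
      (∑ i ∈ Finset.Icc 1 N, ∫ t in (x (i-1))..(x i), g t) = ∫ t in (x 0)..(x N), g t := by
    intro g hg
    have := intervalIntegral.sum_integral_adjacent_intervals (μ := MeasureTheory.volume)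
      (f := g) (a := x) (n := N) ?_
    · rw [← this, ← Finset.Ico_add_one_right_eq_Icc, Finset.sum_Ico_eq_sum_range]
      simp [Nat.add_comm 1]
    · intro k hk
      apply ContinuousOn.intervalIntegrable
      apply hg.mono
      rw [Set.uIcc_of_le (le_of_lt (hx k hk))]
      exact Set.Icc_subset_Icc (hmono k (le_of_lt hk) 0 (Nat.zero_le _))
        (hmono N le_rfl (k+1) hk)
  have hA : (∫ t in (x 0)..(x N), fα t)
      = (∫ t in (x 0)..(x N), f t)
        + Λ * ((∫ t in (x 0)..(x N), fα t) - ∫ t in (x 0)..(x N), b t) := by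
    calc (∫ t in (x 0)..(x N), fα t)
        = ∑ i ∈ Finset.Icc 1 N, ∫ t in (x (i-1))..(x i), fα t := (hsum fα hfα).symm
      _ = ∑ i ∈ Finset.Icc 1 N, ((∫ t in (x (i-1))..(x i), f t)
            + aCoef x N i * α i * ((∫ t in (x 0)..(x N), fα t) - ∫ t in (x 0)..(x N), b t)) :=
          Finset.sum_congr rfl hstep
      _ = (∫ t in (x 0)..(x N), f t)
            + Λ * ((∫ t in (x 0)..(x N), fα t) - ∫ t in (x 0)..(x N), b t) := by
          rw [Finset.sum_add_distrib, hsum f hf, ← Finset.sum_mul, hΛdef]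
  have h1Λ : (1 : ℝ) - Λ ≠ 0 := by
    intro h; apply hΛ; linarith
  field_simp
  linear_combination hA
end

section
/- Let I = [x₀, x_N] with the uniform partition x_i = x₀ + i·h, h = (x_N − x₀)/N. Let f, b : I → ℝ be continuous with b agreeing with f at x₀ and x_N, and let α = (α₁,...,α_N) be a scale vector with |α_i| < 1 for each i and Σ_{i=1}^N α_i = 0. If f^α is the α-fractal function of f with base b and this uniform partition, then ∫_{x₀}^{x_N} f^α(x) dx = ∫_{x₀}^{x_N} f(x) dx. -/
theorem integral_eq_of_sum_scales_zero (N : ℕ) (hN : 1 ≤ N) (x : ℕ → ℝ)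
    (hlt : x 0 < x N)
    (huni : ∀ i ≤ N, x i = x 0 + i * ((x N - x 0) / N))
    (f b fα : ℝ → ℝ)
    (hf : ContinuousOn f (Set.Icc (x 0) (x N)))
    (hb : ContinuousOn b (Set.Icc (x 0) (x N)))
    (hfα : ContinuousOn fα (Set.Icc (x 0) (x N)))
    (hb0 : b (x 0) = f (x 0)) (hbN : b (x N) = f (x N))
    (α : ℕ → ℝ) (hα : ∀ i ∈ Finset.Icc 1 N, |α i| < 1)
    (hsum : ∑ i ∈ Finset.Icc 1 N, α i = 0)
    (hself : ∀ i ∈ Finset.Icc 1 N, ∀ t ∈ Set.Icc (x (i - 1)) (x i),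
      fα t = f t + α i * (fα (Linv x N i t) - b (Linv x N i t))) :
    ∫ t in (x 0)..(x N), fα t = ∫ t in (x 0)..(x N), f t := by
  have hc : (0:ℝ) < x N - x 0 := by linarith
  have hNR : (0:ℝ) < (N:ℝ) := by exact_mod_cast Nat.lt_of_lt_of_le Nat.zero_lt_one hN
  set h : ℝ := (x N - x 0) / N with hh
  have hhpos : 0 < h := div_pos hc hNR
  have hstep : ∀ k, k < N → x (k + 1) - x k = h := by
    intro k hk
    rw [huni (k + 1) hk, huni k hk.le]
    push_cast; ring
  have hxle : ∀ k, k ≤ N → x 0 ≤ x k := by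
    intro k hk
    rw [huni k hk]
    have : (0:ℝ) ≤ (k:ℝ) := Nat.cast_nonneg k
    nlinarith
  have hxge : ∀ k, k ≤ N → x k ≤ x N := by
    intro k hk
    rw [huni k hk, huni N le_rfl]
    have : (k:ℝ) ≤ (N:ℝ) := Nat.cast_le.mpr hk
    nlinarith
  have hle : ∀ k, k < N → x k ≤ x (k + 1) := fun k hk => by
    have := hstep k hk; linarith
  have hsub : ∀ k, k < N → Set.uIcc (x k) (x (k + 1)) ⊆ Set.Icc (x 0) (x N) := by
    intro k hk
    rw [Set.uIcc_of_le (hle k hk)]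
    exact Set.Icc_subset_Icc (hxle k hk.le) (hxge (k + 1) hk)
  have hIccfull : Set.uIcc (x 0) (x N) ⊆ Set.Icc (x 0) (x N) := by
    rw [Set.uIcc_of_le hlt.le]
  have hintfα : IntervalIntegrable fα MeasureTheory.volume (x 0) (x N) :=
    (hfα.mono hIccfull).intervalIntegrable
  have hintf : IntervalIntegrable f MeasureTheory.volume (x 0) (x N) :=
    (hf.mono hIccfull).intervalIntegrable
  set Cv : ℝ := ∫ u in (x 0)..(x N), (fα u - b u) with hCv
  have hterm : ∀ k, k < N →
      (∫ t in (x k)..(x (k + 1)), (fα t - f t)) = α (k + 1) * ((1 / (N:ℝ)) * Cv) := by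
    intro k hk
    have hik : (k + 1) ∈ Finset.Icc 1 N := by
      simp [Finset.mem_Icc, Nat.succ_le_of_lt hk]
    have ha : aCoef x N (k + 1) = 1 / (N:ℝ) := by
      unfold aCoef
      simp only [Nat.add_sub_cancel]
      rw [hstep k hk, hh]
      field_simp
    have ha0 : aCoef x N (k + 1) ≠ 0 := by rw [ha]; positivity
    have hnum0 : x k - eCoef x N (k + 1) = x 0 * aCoef x N (k + 1) := by
      unfold eCoef aCoef
      simp only [Nat.add_sub_cancel]
      field_simp
      ring
    have hnumN : x (k + 1) - eCoef x N (k + 1) = x N * aCoef x N (k + 1) := by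
      unfold eCoef aCoef
      simp only [Nat.add_sub_cancel]
      field_simp
      ring
    have hL0 : Linv x N (k + 1) (x k) = x 0 := by
      unfold Linv
      rw [hnum0, mul_div_cancel_right₀ _ ha0]
    have hLN : Linv x N (k + 1) (x (k + 1)) = x N := by
      unfold Linv
      rw [hnumN, mul_div_cancel_right₀ _ ha0]
    have hcongr : (∫ t in (x k)..(x (k + 1)), (fα t - f t))
        = ∫ t in (x k)..(x (k + 1)),
            α (k + 1) * ((fun u => fα u - b u) (Linv x N (k + 1) t)) := by
      apply intervalIntegral.integral_congr
      intro t ht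
      rw [Set.uIcc_of_le (hle k hk)] at ht
      have hx := hself (k + 1) hik t (by simpa [Nat.add_sub_cancel] using ht)
      simp only [hx]
      ring
    rw [hcongr, intervalIntegral.integral_const_mul]
    congr 1
    calc (∫ t in (x k)..(x (k + 1)), (fun u => fα u - b u) (Linv x N (k + 1) t))
        = ∫ t in (x k)..(x (k + 1)),
            (fun s => (fun u => fα u - b u) (s / aCoef x N (k + 1)))
              (t - eCoef x N (k + 1)) := by
          simp only [Linv]
      _ = ∫ s in (x k - eCoef x N (k + 1))..(x (k + 1) - eCoef x N (k + 1)),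
            (fun u => fα u - b u) (s / aCoef x N (k + 1)) :=
          intervalIntegral.integral_comp_sub_right
            (fun s => (fun u => fα u - b u) (s / aCoef x N (k + 1))) _
      _ = aCoef x N (k + 1) • ∫ s in ((x k - eCoef x N (k + 1)) / aCoef x N (k + 1))..(
            (x (k + 1) - eCoef x N (k + 1)) / aCoef x N (k + 1)), (fα s - b s) :=
          intervalIntegral.integral_comp_div (fun u => fα u - b u) ha0
      _ = (1 / (N:ℝ)) * Cv := by
          have e0 : (x k - eCoef x N (k + 1)) / aCoef x N (k + 1) = x 0 := hL0
          have eN : (x (k + 1) - eCoef x N (k + 1)) / aCoef x N (k + 1) = x N := hLN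
          rw [e0, eN, ha, smul_eq_mul, hCv]
  have hintsub : ∀ k, k < N →
      IntervalIntegrable (fun t => fα t - f t) MeasureTheory.volume (x k) (x (k + 1)) := by
    intro k hk
    exact ((hfα.mono (hsub k hk)).sub (hf.mono (hsub k hk))).intervalIntegrable
  have hsplit := intervalIntegral.sum_integral_adjacent_intervals (μ := MeasureTheory.volume)
    (a := x) (n := N) hintsub
  have hzero : (∫ t in (x 0)..(x N), (fα t - f t)) = 0 := by
    rw [← hsplit]
    rw [Finset.sum_congr rfl fun k hk => hterm k (Finset.mem_range.mp hk)]
    rw [← Finset.sum_mul]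
    have hs0 : ∑ k ∈ Finset.range N, α (k + 1) = 0 := by
      rw [← Finset.Ico_add_one_right_eq_Icc, Finset.sum_Ico_eq_sum_range] at hsum
      simpa [add_comm] using hsum
    rw [hs0, zero_mul]
  have := intervalIntegral.integral_sub hintfα hintf
  rw [this] at hzero
  linarith
end

section
/- Let I = [x₀, x_N] with a uniform partition into N equal subintervals, and let f, b : I → ℝ be continuous with b agreeing with f at the endpoints. Let α = (α₁,...,α_N) and β = (β₁,...,β_N) be scale vectors with all entries of absolute value less than 1 and Σ_{i=1}^N α_i = Σ_{i=1}^N β_i. If f^α and f^β denote the α-fractal and β-fractal functions of f with base b for this partition, then ∫_{x₀}^{x_N} f^α(x) dx = ∫_{x₀}^{x_N} f^β(x) dx. -/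
theorem integral_eq_of_sum_scales_eq (N : ℕ) (hN : 1 ≤ N) (x : ℕ → ℝ)
    (hlt : x 0 < x N)
    (huni : ∀ i ≤ N, x i = x 0 + i * ((x N - x 0) / N))
    (f b fα fβ : ℝ → ℝ)
    (hf : ContinuousOn f (Set.Icc (x 0) (x N)))
    (hb : ContinuousOn b (Set.Icc (x 0) (x N)))
    (hfα : ContinuousOn fα (Set.Icc (x 0) (x N)))
    (hfβ : ContinuousOn fβ (Set.Icc (x 0) (x N)))
    (hb0 : b (x 0) = f (x 0)) (hbN : b (x N) = f (x N))
    (α β : ℕ → ℝ)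
    (hα : ∀ i ∈ Finset.Icc 1 N, |α i| < 1)
    (hβ : ∀ i ∈ Finset.Icc 1 N, |β i| < 1)
    (hsum : ∑ i ∈ Finset.Icc 1 N, α i = ∑ i ∈ Finset.Icc 1 N, β i)
    (hselfα : ∀ i ∈ Finset.Icc 1 N, ∀ t ∈ Set.Icc (x (i - 1)) (x i),
      fα t = f t + α i * (fα (Linv x N i t) - b (Linv x N i t)))
    (hselfβ : ∀ i ∈ Finset.Icc 1 N, ∀ t ∈ Set.Icc (x (i - 1)) (x i),
      fβ t = f t + β i * (fβ (Linv x N i t) - b (Linv x N i t))) :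
    ∫ t in (x 0)..(x N), fα t = ∫ t in (x 0)..(x N), fβ t := by
  have hN0 : (0:ℝ) < N := by exact_mod_cast Nat.lt_of_lt_of_le Nat.zero_lt_one hN
  have hd : (0:ℝ) < x N - x 0 := sub_pos.mpr hlt
  set δ : ℝ := (x N - x 0) / N with hδ
  have hδpos : 0 < δ := div_pos hd hN0
  have hmono : ∀ j k, j ≤ k → k ≤ N → x j ≤ x k := by
    intro j k hjk hk
    rw [huni j (hjk.trans hk), huni k hk]
    have hc : (j:ℝ) ≤ k := by exact_mod_cast hjk
    nlinarith
  have hmem : ∀ i ≤ N, x i ∈ Set.Icc (x 0) (x N) := fun i hi =>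
    ⟨hmono 0 i (Nat.zero_le _) hi, hmono i N hi le_rfl⟩
  -- key lemma applied to both fα and fβ
  have key : ∀ (γ : ℕ → ℝ) (g : ℝ → ℝ), ContinuousOn g (Set.Icc (x 0) (x N)) →
      (∀ i ∈ Finset.Icc 1 N, ∀ t ∈ Set.Icc (x (i - 1)) (x i),
        g t = f t + γ i * (g (Linv x N i t) - b (Linv x N i t))) →
      ∫ t in (x 0)..(x N), g t = (∫ t in (x 0)..(x N), f t)
        + ((∑ i ∈ Finset.Icc 1 N, γ i) / N)
          * ((∫ t in (x 0)..(x N), g t) - ∫ t in (x 0)..(x N), b t) := by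
    intro γ g hg hself
    -- facts per subinterval
    have hfacts : ∀ i ∈ Finset.Icc 1 N,
        (∫ t in (x (i-1))..(x i), g t) = (∫ t in (x (i-1))..(x i), f t)
          + γ i * ((1/(N:ℝ)) * ((∫ t in (x 0)..(x N), g t) - ∫ t in (x 0)..(x N), b t)) := by
      intro i hi
      rw [Finset.mem_Icc] at hi
      obtain ⟨hi1, hi2⟩ := hi
      have him : i - 1 ≤ N := le_trans (Nat.sub_le i 1) hi2
      have hdiff : x i - x (i - 1) = δ := by
        rw [huni i hi2, huni (i-1) him, Nat.cast_sub hi1, Nat.cast_one]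
        ring
      have ha : aCoef x N i = 1 / N := by
        unfold aCoef
        rw [hdiff, hδ]
        field_simp
      have ha0 : aCoef x N i ≠ 0 := by rw [ha]; positivity
      have hapos : 0 < aCoef x N i := by rw [ha]; positivity
      have hL0 : aCoef x N i * x 0 + eCoef x N i = x (i - 1) := by
        unfold aCoef eCoef; field_simp; ring
      have hLN : aCoef x N i * x N + eCoef x N i = x i := by
        unfold aCoef eCoef; field_simp; ring
      have hLinv0 : Linv x N i (x (i - 1)) = x 0 := by
        rw [Linv, ← hL0]; field_simp; ring
      have hLinvN : Linv x N i (x i) = x N := by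
        rw [Linv, ← hLN]; field_simp; ring
      have hxle : x (i - 1) ≤ x i := hmono _ _ (Nat.sub_le i 1) hi2
      have hmaps : ∀ t ∈ Set.Icc (x (i-1)) (x i), Linv x N i t ∈ Set.Icc (x 0) (x N) := by
        intro t ht
        constructor
        · rw [← hLinv0]
          unfold Linv
          apply div_le_div_of_nonneg_right _ hapos.le
          · linarith [ht.1]
        · rw [← hLinvN]
          unfold Linv
          apply div_le_div_of_nonneg_right _ hapos.le
          · linarith [ht.2]
      have hLinvCont : Continuous (Linv x N i) := by
        unfold Linv
        exact (continuous_sub_right _).div_const _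
      -- change of variables
      have hcov : ∀ h : ℝ → ℝ, (∫ t in (x (i-1))..(x i), h (Linv x N i t))
          = (1/(N:ℝ)) * ∫ t in (x 0)..(x N), h t := by
        intro h
        have hrw : ∀ t : ℝ, Linv x N i t
            = (aCoef x N i)⁻¹ * t + (-(eCoef x N i) / aCoef x N i) := by
          intro t; unfold Linv; field_simp; ring
        simp only [hrw]
        rw [intervalIntegral.integral_comp_mul_add h (inv_ne_zero ha0) _]
        have e0 : (aCoef x N i)⁻¹ * x (i-1) + -(eCoef x N i) / aCoef x N i = x 0 := by
          rw [← hrw]; exact hLinv0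
        have eN : (aCoef x N i)⁻¹ * x i + -(eCoef x N i) / aCoef x N i = x N := by
          rw [← hrw]; exact hLinvN
        rw [e0, eN, inv_inv, ha, smul_eq_mul]
      -- integrability of the pieces
      have hsub : Set.Icc (x (i-1)) (x i) ⊆ Set.Icc (x 0) (x N) :=
        Set.Icc_subset_Icc (hmem _ him).1 (hmem _ hi2).2
      have huIcc : Set.uIcc (x (i-1)) (x i) = Set.Icc (x (i-1)) (x i) :=
        Set.uIcc_of_le hxle
      have hintf : IntervalIntegrable f MeasureTheory.volume (x (i-1)) (x i) :=
        ((hf.mono hsub).intervalIntegrable_of_Icc hxle)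
      have hcomp : ContinuousOn (fun t => g (Linv x N i t) - b (Linv x N i t))
          (Set.Icc (x (i-1)) (x i)) := by
        apply ContinuousOn.sub
        · exact hg.comp hLinvCont.continuousOn hmaps
        · exact hb.comp hLinvCont.continuousOn hmaps
      have hintc : IntervalIntegrable (fun t => γ i * (g (Linv x N i t) - b (Linv x N i t)))
          MeasureTheory.volume (x (i-1)) (x i) :=
        ((hcomp.const_smul (γ i)).intervalIntegrable_of_Icc hxle)
      -- rewrite the integrand via self-similarity
      have hcongr : (∫ t in (x (i-1))..(x i), g t)
          = ∫ t in (x (i-1))..(x i),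
              (f t + γ i * (g (Linv x N i t) - b (Linv x N i t))) := by
        apply intervalIntegral.integral_congr
        intro t ht
        rw [huIcc] at ht
        exact hself i (Finset.mem_Icc.mpr ⟨hi1, hi2⟩) t ht
      rw [hcongr, intervalIntegral.integral_add hintf hintc,
        intervalIntegral.integral_const_mul]
      congr 1
      rw [hcov (fun s => g s - b s)]
      congr 1
      rw [intervalIntegral.integral_sub
        ((hg.intervalIntegrable_of_Icc hlt.le))
        ((hb.intervalIntegrable_of_Icc hlt.le))]
    -- integrability on each adjacent interval, for splitting
    have hintg : ∀ k < N, IntervalIntegrable g MeasureTheory.volume (x k) (x (k+1)) := by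
      intro k hk
      have hle : x k ≤ x (k+1) := hmono _ _ (Nat.le_succ k) hk
      have hsub : Set.Icc (x k) (x (k+1)) ⊆ Set.Icc (x 0) (x N) :=
        Set.Icc_subset_Icc (hmem _ hk.le).1 (hmem _ hk).2
      exact (hg.mono hsub).intervalIntegrable_of_Icc hle
    have hintf' : ∀ k < N, IntervalIntegrable f MeasureTheory.volume (x k) (x (k+1)) := by
      intro k hk
      have hle : x k ≤ x (k+1) := hmono _ _ (Nat.le_succ k) hk
      have hsub : Set.Icc (x k) (x (k+1)) ⊆ Set.Icc (x 0) (x N) :=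
        Set.Icc_subset_Icc (hmem _ hk.le).1 (hmem _ hk).2
      exact (hf.mono hsub).intervalIntegrable_of_Icc hle
    have hsplitg : ∑ k ∈ Finset.range N, (∫ t in (x k)..(x (k+1)), g t)
        = ∫ t in (x 0)..(x N), g t :=
      intervalIntegral.sum_integral_adjacent_intervals hintg
    have hsplitf : ∑ k ∈ Finset.range N, (∫ t in (x k)..(x (k+1)), f t)
        = ∫ t in (x 0)..(x N), f t :=
      intervalIntegral.sum_integral_adjacent_intervals hintf'
    have hIcc_range : ∀ F : ℕ → ℝ, ∑ i ∈ Finset.Icc 1 N, F i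
        = ∑ k ∈ Finset.range N, F (k+1) := by
      intro F
      rw [← Finset.Ico_add_one_right_eq_Icc, Finset.sum_Ico_eq_sum_range]
      simp [add_comm]
    calc ∫ t in (x 0)..(x N), g t
        = ∑ k ∈ Finset.range N, (∫ t in (x k)..(x (k+1)), g t) := hsplitg.symm
      _ = ∑ k ∈ Finset.range N, ((∫ t in (x k)..(x (k+1)), f t)
            + γ (k+1) * ((1/(N:ℝ)) * ((∫ t in (x 0)..(x N), g t)
              - ∫ t in (x 0)..(x N), b t))) := by
          apply Finset.sum_congr rfl
          intro k hk
          rw [Finset.mem_range] at hk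
          have := hfacts (k+1) (Finset.mem_Icc.mpr ⟨Nat.le_add_left 1 k, hk⟩)
          simpa using this
      _ = (∫ t in (x 0)..(x N), f t)
            + ((∑ i ∈ Finset.Icc 1 N, γ i) / N)
              * ((∫ t in (x 0)..(x N), g t) - ∫ t in (x 0)..(x N), b t) := by
          rw [Finset.sum_add_distrib, hsplitf, ← Finset.sum_mul, hIcc_range γ]
          ring
  have hkα := key α fα hfα hselfα
  have hkβ := key β fβ hfβ hselfβ
  set S : ℝ := ∑ i ∈ Finset.Icc 1 N, α i with hS
  rw [hsum] at hkα
  set lam : ℝ := (∑ i ∈ Finset.Icc 1 N, β i) / N with hlam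
  -- |lam| < 1
  have habs : |∑ i ∈ Finset.Icc 1 N, β i| < N := by
    calc |∑ i ∈ Finset.Icc 1 N, β i| ≤ ∑ i ∈ Finset.Icc 1 N, |β i| :=
          Finset.abs_sum_le_sum_abs _ _
      _ < ∑ i ∈ Finset.Icc 1 N, (1:ℝ) := by
          apply Finset.sum_lt_sum_of_nonempty
          · exact Finset.nonempty_Icc.mpr hN
          · exact hβ
      _ = N := by simp [Nat.card_Icc]
  have hlam1 : lam ≠ 1 := by
    intro h
    rw [hlam, div_eq_one_iff_eq hN0.ne'] at h
    have := habs
    rw [h] at this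
    simp at this
  have hsubeq : (∫ t in (x 0)..(x N), fα t) - (∫ t in (x 0)..(x N), fβ t)
      = lam * ((∫ t in (x 0)..(x N), fα t) - (∫ t in (x 0)..(x N), fβ t)) := by
    rw [hlam]
    nlinarith [hkα, hkβ]
  have : (1 - lam) * ((∫ t in (x 0)..(x N), fα t) - (∫ t in (x 0)..(x N), fβ t)) = 0 := by
    linarith [hsubeq]
  rcases mul_eq_zero.mp this with h | h
  · exact absurd (by linarith : lam = 1) hlam1
  · linarith
end

section
/- Let f^α be the α-fractal function of a continuous f : [x₀,x_N] → ℝ with base b (with b matching f at the endpoints, partition x₀ < ... < x_N, and |α_i| < 1). Then |∫_{x₀}^{x_N} f^α(x) dx − ∫_{x₀}^{x_N} f(x) dx| ≤ (|λ|/(1−|λ|)) · |∫_{x₀}^{x_N} (f(x) − b(x)) dx| where λ = Σ a_i α_i. In particular, as the maximum scaling factor |α|_∞ = max_i |α_i| tends to 0 (over a family of scale vectors), ∫_{x₀}^{x_N} f^α(x) dx tends to ∫_{x₀}^{x_N} f(x) dx; and if α = 0 then ∫_{x₀}^{x_N} f^α(x) dx = ∫_{x₀}^{x_N} f(x) dx.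 -/
private lemma xlt_aux {N : ℕ} {x : ℕ → ℝ} (hx : ∀ i, i < N → x i < x (i + 1)) :
    ∀ {i j : ℕ}, i < j → j ≤ N → x i < x j := by
  intro i j
  induction j with
  | zero => omega
  | succ k ih =>
    intro hij hjN
    rcases Nat.lt_succ_iff_lt_or_eq.mp hij with h | h
    · exact (ih h (by omega)).trans (hx k (by omega))
    · subst h; exact hx i (by omega)

private lemma xle_aux {N : ℕ} {x : ℕ → ℝ} (hx : ∀ i, i < N → x i < x (i + 1)) :
    ∀ {i j : ℕ}, i ≤ j → j ≤ N → x i ≤ x j := by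
  intro i j hij hjN
  rcases eq_or_lt_of_le hij with h | h
  · rw [h]
  · exact (xlt_aux hx h hjN).le

private lemma key_identity (N : ℕ) (hN : 1 ≤ N) (x : ℕ → ℝ)
    (hx : ∀ i, i < N → x i < x (i + 1))
    (f b : ℝ → ℝ)
    (hf : ContinuousOn f (Set.Icc (x 0) (x N)))
    (hb : ContinuousOn b (Set.Icc (x 0) (x N)))
    (α : ℕ → ℝ) (fα : ℝ → ℝ) (hfα : ContinuousOn fα (Set.Icc (x 0) (x N)))
    (heq : ∀ i ∈ Finset.Icc 1 N, ∀ t ∈ Set.Icc (x (i - 1)) (x i),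
      fα t = f t + α i * (fα (Linv x N i t) - b (Linv x N i t))) :
    (∫ t in (x 0)..(x N), fα t) = (∫ t in (x 0)..(x N), f t) +
      (∑ i ∈ Finset.Icc 1 N, aCoef x N i * α i) *
        ((∫ t in (x 0)..(x N), fα t) - (∫ t in (x 0)..(x N), b t)) := by
  have h0N : x 0 < x N := xlt_aux hx (by omega) le_rfl
  have hD : x N - x 0 ≠ 0 := sub_ne_zero_of_ne h0N.ne'
  have hlt_i : ∀ i ∈ Finset.Icc 1 N, x (i - 1) < x i := by
    intro i hi; obtain ⟨h1, h2⟩ := Finset.mem_Icc.mp hi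
    have h := hx (i - 1) (by omega)
    have e : i - 1 + 1 = i := by omega
    rwa [e] at h
  have hsub : ∀ i ∈ Finset.Icc 1 N, Set.Icc (x (i - 1)) (x i) ⊆ Set.Icc (x 0) (x N) := by
    intro i hi; obtain ⟨h1, h2⟩ := Finset.mem_Icc.mp hi
    exact Set.Icc_subset_Icc (xle_aux hx (by omega) (by omega)) (xle_aux hx h2 le_rfl)
  have ha : ∀ i ∈ Finset.Icc 1 N, 0 < aCoef x N i := fun i hi =>
    div_pos (sub_pos.mpr (hlt_i i hi)) (sub_pos.mpr h0N)
  have hA : ∀ i ∈ Finset.Icc 1 N, x i - x (i - 1) ≠ 0 := fun i hi =>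
    sub_ne_zero_of_ne (hlt_i i hi).ne'
  have hL1 : ∀ i ∈ Finset.Icc 1 N, Linv x N i (x (i - 1)) = x 0 := by
    intro i hi
    have hAi := hA i hi
    unfold Linv eCoef aCoef
    field_simp
    ring
  have hL2 : ∀ i ∈ Finset.Icc 1 N, Linv x N i (x i) = x N := by
    intro i hi
    have hAi := hA i hi
    unfold Linv eCoef aCoef
    field_simp
    ring
  have hform : ∀ i, ∀ t : ℝ, Linv x N i t = t / aCoef x N i + -(eCoef x N i / aCoef x N i) := by
    intro i t; rw [Linv, sub_div, sub_eq_add_neg]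
  have hsubst : ∀ i ∈ Finset.Icc 1 N, ∀ g : ℝ → ℝ,
      (∫ t in (x (i - 1))..(x i), g (Linv x N i t)) = aCoef x N i * ∫ t in (x 0)..(x N), g t := by
    intro i hi g
    have hai := (ha i hi).ne'
    calc (∫ t in (x (i - 1))..(x i), g (Linv x N i t))
        = ∫ t in (x (i - 1))..(x i), g (t / aCoef x N i + -(eCoef x N i / aCoef x N i)) := by
          simp_rw [hform]
      _ = aCoef x N i • ∫ t in (x (i - 1) / aCoef x N i + -(eCoef x N i / aCoef x N i))..(x i / aCoef x N i + -(eCoef x N i / aCoef x N i)), g t :=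
          intervalIntegral.integral_comp_div_add g hai _
      _ = aCoef x N i * ∫ t in (x 0)..(x N), g t := by
          rw [show x (i - 1) / aCoef x N i + -(eCoef x N i / aCoef x N i) = x 0 from
                (hform i _).symm.trans (hL1 i hi),
              show x i / aCoef x N i + -(eCoef x N i / aCoef x N i) = x N from
                (hform i _).symm.trans (hL2 i hi), smul_eq_mul]
  have hLc : ∀ i, Continuous (Linv x N i) := by
    intro i; unfold Linv; exact (continuous_id.sub continuous_const).div_const _
  have hmaps : ∀ i ∈ Finset.Icc 1 N, Set.MapsTo (Linv x N i) (Set.Icc (x (i - 1)) (x i))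
      (Set.Icc (x 0) (x N)) := by
    intro i hi t ht
    have hai : 0 < aCoef x N i := ha i hi
    constructor
    · rw [← hL1 i hi]; unfold Linv; gcongr; exact ht.1
    · rw [← hL2 i hi]; unfold Linv; gcongr; exact ht.2
  have hsplit : ∀ g : ℝ → ℝ, ContinuousOn g (Set.Icc (x 0) (x N)) →
      (∫ t in (x 0)..(x N), g t) = ∑ i ∈ Finset.Icc 1 N, ∫ t in (x (i - 1))..(x i), g t := by
    intro g hg
    have hint : ∀ k, k < N → IntervalIntegrable g MeasureTheory.volume (x k) (x (k + 1)) := by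
      intro k hk
      apply ContinuousOn.intervalIntegrable
      have : Set.uIcc (x k) (x (k + 1)) = Set.Icc (x k) (x (k + 1)) :=
        Set.uIcc_of_le (hx k hk).le
      rw [this]
      exact hg.mono (Set.Icc_subset_Icc (xle_aux hx (by omega) (by omega))
        (xle_aux hx hk (le_refl N)))
    rw [← intervalIntegral.sum_integral_adjacent_intervals hint, ← Finset.Ico_add_one_right_eq_Icc,
        Finset.sum_Ico_eq_sum_range]
    refine (Finset.sum_congr ?_ ?_).symm
    · congr 1
    · intro k _
      have e1 : 1 + k - 1 = k := by omega
      have e2 : 1 + k = k + 1 := by omega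
      rw [e1, e2]
  have hintw : ∀ g : ℝ → ℝ, ContinuousOn g (Set.Icc (x 0) (x N)) →
      IntervalIntegrable g MeasureTheory.volume (x 0) (x N) := by
    intro g hg
    apply ContinuousOn.intervalIntegrable
    rwa [Set.uIcc_of_le h0N.le]
  set g : ℝ → ℝ := fun s => fα s - b s with hgdef
  have hg : ContinuousOn g (Set.Icc (x 0) (x N)) := hfα.sub hb
  have hIK : (∫ t in (x 0)..(x N), g t) =
      (∫ t in (x 0)..(x N), fα t) - (∫ t in (x 0)..(x N), b t) :=
    intervalIntegral.integral_sub (hintw fα hfα) (hintw b hb)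
  have hpiece : ∀ i ∈ Finset.Icc 1 N,
      (∫ t in (x (i - 1))..(x i), fα t) = (∫ t in (x (i - 1))..(x i), f t) +
        aCoef x N i * α i * ((∫ t in (x 0)..(x N), fα t) - (∫ t in (x 0)..(x N), b t)) := by
    intro i hi
    have hle := (hlt_i i hi).le
    have huIcc : Set.uIcc (x (i - 1)) (x i) = Set.Icc (x (i - 1)) (x i) := Set.uIcc_of_le hle
    have hcg : ContinuousOn (fun t => g (Linv x N i t)) (Set.Icc (x (i - 1)) (x i)) :=
      hg.comp (hLc i).continuousOn (hmaps i hi)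
    have hintf : IntervalIntegrable f MeasureTheory.volume (x (i - 1)) (x i) := by
      apply ContinuousOn.intervalIntegrable; rw [huIcc]; exact hf.mono (hsub i hi)
    have hintg : IntervalIntegrable (fun t => α i * g (Linv x N i t))
        MeasureTheory.volume (x (i - 1)) (x i) := by
      apply ContinuousOn.intervalIntegrable; rw [huIcc]
      exact continuousOn_const.mul hcg
    have hEq : Set.EqOn fα (fun t => f t + α i * g (Linv x N i t))
        (Set.uIcc (x (i - 1)) (x i)) := by
      rw [huIcc]; intro t ht; exact heq i hi t ht
    rw [intervalIntegral.integral_congr hEq, intervalIntegral.integral_add hintf hintg,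
        intervalIntegral.integral_const_mul, hsubst i hi g, hIK]
    ring
  conv_lhs => rw [hsplit fα hfα]
  rw [Finset.sum_congr rfl hpiece, Finset.sum_add_distrib, ← Finset.sum_mul, ← hsplit f hf]

private lemma abs_bound {I J K lam : ℝ} (hE : I = J + lam * (I - K)) (hlam : |lam| < 1) :
    |I - J| ≤ |lam| / (1 - |lam|) * |J - K| := by
  have h1 : (1 - lam) * (I - J) = lam * (J - K) := by linear_combination hE
  have h2 : 0 < 1 - |lam| := by linarith
  rw [div_mul_eq_mul_div, le_div_iff₀ h2]
  have h3 : 1 - |lam| ≤ |1 - lam| := by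
    have := abs_sub_abs_le_abs_sub 1 lam; simpa using this
  calc |I - J| * (1 - |lam|) ≤ |I - J| * |1 - lam| :=
        mul_le_mul_of_nonneg_left h3 (abs_nonneg _)
    _ = |(1 - lam) * (I - J)| := by rw [abs_mul, mul_comm]
    _ = |lam * (J - K)| := by rw [h1]
    _ = |lam| * |J - K| := abs_mul _ _

private lemma sum_aCoef (N : ℕ) (hN : 1 ≤ N) (x : ℕ → ℝ)
    (hx : ∀ i, i < N → x i < x (i + 1)) :
    ∑ i ∈ Finset.Icc 1 N, aCoef x N i = 1 := by
  have h0N : x 0 < x N := xlt_aux hx (by omega) le_rfl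
  have hD : x N - x 0 ≠ 0 := sub_ne_zero_of_ne h0N.ne'
  have h1 : ∑ i ∈ Finset.Icc 1 N, aCoef x N i
      = (∑ i ∈ Finset.Icc 1 N, (x i - x (i - 1))) / (x N - x 0) := by
    rw [Finset.sum_div]; rfl
  have h2 : ∑ i ∈ Finset.Icc 1 N, (x i - x (i - 1)) = x N - x 0 := by
    rw [← Finset.Ico_add_one_right_eq_Icc, Finset.sum_Ico_eq_sum_range]
    have : ∀ k ∈ Finset.range (N + 1 - 1), x (1 + k) - x (1 + k - 1) = x (k + 1) - x k := by
      intro k _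
      have e1 : 1 + k - 1 = k := by omega
      have e2 : 1 + k = k + 1 := by omega
      rw [e1, e2]
    rw [Finset.sum_congr rfl this, show N + 1 - 1 = N by omega, Finset.sum_range_sub]
  rw [h1, h2, div_self hD]

private lemma lam_abs_le (N : ℕ) (x : ℕ → ℝ) (α : ℕ → ℝ)
    (ha : ∀ i ∈ Finset.Icc 1 N, 0 < aCoef x N i) :
    |∑ i ∈ Finset.Icc 1 N, aCoef x N i * α i| ≤ ∑ i ∈ Finset.Icc 1 N, aCoef x N i * |α i| := by
  refine (Finset.abs_sum_le_sum_abs _ _).trans (le_of_eq ?_)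
  refine Finset.sum_congr rfl fun i hi => ?_
  rw [abs_mul, abs_of_pos (ha i hi)]

theorem integral_close_and_limit (N : ℕ) (hN : 1 ≤ N) (x : ℕ → ℝ)
    (hx : ∀ i, i < N → x i < x (i + 1))
    (f b : ℝ → ℝ)
    (hf : ContinuousOn f (Set.Icc (x 0) (x N)))
    (hb : ContinuousOn b (Set.Icc (x 0) (x N)))
    (hb0 : b (x 0) = f (x 0)) (hbN : b (x N) = f (x N)) :
    -- (1) quantitative bound
    (∀ (α : ℕ → ℝ), (∀ i ∈ Finset.Icc 1 N, |α i| < 1) →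
      ∀ fα : ℝ → ℝ, ContinuousOn fα (Set.Icc (x 0) (x N)) →
        (∀ i ∈ Finset.Icc 1 N, ∀ t ∈ Set.Icc (x (i - 1)) (x i),
          fα t = f t + α i * (fα (Linv x N i t) - b (Linv x N i t))) →
        |(∫ t in (x 0)..(x N), fα t) - ∫ t in (x 0)..(x N), f t| ≤
          (|∑ i ∈ Finset.Icc 1 N, aCoef x N i * α i| /
              (1 - |∑ i ∈ Finset.Icc 1 N, aCoef x N i * α i|)) *
            |∫ t in (x 0)..(x N), (f t - b t)|) ∧
    -- (2) as |α|_∞ → 0 over a family of scale vectors, the integrals converge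
    (∀ (ι : Type) (l : Filter ι) (A : ι → ℕ → ℝ) (F : ι → ℝ → ℝ),
      (∀ j, ∀ i ∈ Finset.Icc 1 N, |A j i| < 1) →
      (∀ j, ContinuousOn (F j) (Set.Icc (x 0) (x N))) →
      (∀ j, ∀ i ∈ Finset.Icc 1 N, ∀ t ∈ Set.Icc (x (i - 1)) (x i),
        F j t = f t + A j i * (F j (Linv x N i t) - b (Linv x N i t))) →
      (∀ i ∈ Finset.Icc 1 N, Filter.Tendsto (fun j => |A j i|) l (nhds 0)) →
      Filter.Tendsto (fun j => ∫ t in (x 0)..(x N), F j t) l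
        (nhds (∫ t in (x 0)..(x N), f t))) ∧
    -- (3) zero scale vector
    (∀ (α : ℕ → ℝ), (∀ i ∈ Finset.Icc 1 N, α i = 0) →
      ∀ fα : ℝ → ℝ, ContinuousOn fα (Set.Icc (x 0) (x N)) →
        (∀ i ∈ Finset.Icc 1 N, ∀ t ∈ Set.Icc (x (i - 1)) (x i),
          fα t = f t + α i * (fα (Linv x N i t) - b (Linv x N i t))) →
        ∫ t in (x 0)..(x N), fα t = ∫ t in (x 0)..(x N), f t) := by
  have h0N : x 0 < x N := xlt_aux hx (by omega) le_rfl
  have hlt_i : ∀ i ∈ Finset.Icc 1 N, x (i - 1) < x i := by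
    intro i hi; obtain ⟨h1, h2⟩ := Finset.mem_Icc.mp hi
    have h := hx (i - 1) (by omega)
    have e : i - 1 + 1 = i := by omega
    rwa [e] at h
  have ha : ∀ i ∈ Finset.Icc 1 N, 0 < aCoef x N i := fun i hi =>
    div_pos (sub_pos.mpr (hlt_i i hi)) (sub_pos.mpr h0N)
  have hintw : ∀ g : ℝ → ℝ, ContinuousOn g (Set.Icc (x 0) (x N)) →
      IntervalIntegrable g MeasureTheory.volume (x 0) (x N) := by
    intro g hg
    apply ContinuousOn.intervalIntegrable
    rwa [Set.uIcc_of_le h0N.le]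
  have hfb : (∫ t in (x 0)..(x N), (f t - b t)) =
      (∫ t in (x 0)..(x N), f t) - (∫ t in (x 0)..(x N), b t) :=
    intervalIntegral.integral_sub (hintw f hf) (hintw b hb)
  -- part 1
  have part1 : ∀ (α : ℕ → ℝ), (∀ i ∈ Finset.Icc 1 N, |α i| < 1) →
      ∀ fα : ℝ → ℝ, ContinuousOn fα (Set.Icc (x 0) (x N)) →
        (∀ i ∈ Finset.Icc 1 N, ∀ t ∈ Set.Icc (x (i - 1)) (x i),
          fα t = f t + α i * (fα (Linv x N i t) - b (Linv x N i t))) →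
        |(∫ t in (x 0)..(x N), fα t) - ∫ t in (x 0)..(x N), f t| ≤
          (|∑ i ∈ Finset.Icc 1 N, aCoef x N i * α i| /
              (1 - |∑ i ∈ Finset.Icc 1 N, aCoef x N i * α i|)) *
            |∫ t in (x 0)..(x N), (f t - b t)| := by
    intro α hα fα hfα heq
    have hkey := key_identity N hN x hx f b hf hb α fα hfα heq
    have hlam : |∑ i ∈ Finset.Icc 1 N, aCoef x N i * α i| < 1 := by
      refine (lam_abs_le N x α ha).trans_lt ?_
      calc ∑ i ∈ Finset.Icc 1 N, aCoef x N i * |α i|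
          < ∑ i ∈ Finset.Icc 1 N, aCoef x N i := by
            refine Finset.sum_lt_sum_of_nonempty (Finset.nonempty_Icc.mpr hN) fun i hi => ?_
            have := ha i hi
            nlinarith [hα i hi, abs_nonneg (α i)]
        _ = 1 := sum_aCoef N hN x hx
    rw [hfb]
    exact abs_bound hkey hlam
  refine ⟨part1, ?_, ?_⟩
  · -- part 2
    intro ι l A F hA hFc hFeq htend
    set J := ∫ t in (x 0)..(x N), f t with hJ
    set C := |∫ t in (x 0)..(x N), (f t - b t)| with hC
    have hCnn : 0 ≤ C := abs_nonneg _
    set s : ι → ℝ := fun j => ∑ i ∈ Finset.Icc 1 N, aCoef x N i * |A j i| with hs_def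
    have hs0 : Filter.Tendsto s l (nhds 0) := by
      have h : Filter.Tendsto s l
          (nhds (∑ i ∈ Finset.Icc 1 N, aCoef x N i * (0:ℝ))) :=
        tendsto_finset_sum _ fun i hi => ((htend i hi).const_mul _)
      simpa using h
    have hev : ∀ᶠ j in l, s j < 1/2 :=
      hs0.eventually_lt_const (by norm_num)
    rw [tendsto_iff_dist_tendsto_zero]
    have hdist : ∀ j, dist (∫ t in (x 0)..(x N), F j t) J =
        |(∫ t in (x 0)..(x N), F j t) - J| := fun j => Real.dist_eq _ _
    simp only [hdist]
    apply squeeze_zero' (Filter.Eventually.of_forall fun j => abs_nonneg _)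
      (g := fun j => 2 * s j * C)
    · filter_upwards [hev] with j hj
      have hbnd := part1 (A j) (hA j) (F j) (hFc j) (hFeq j)
      have hle : |∑ i ∈ Finset.Icc 1 N, aCoef x N i * A j i| ≤ s j := lam_abs_le N x (A j) ha
      set lam := |∑ i ∈ Finset.Icc 1 N, aCoef x N i * A j i| with hlamdef
      have hlamnn : 0 ≤ lam := abs_nonneg _
      have hsnn : 0 ≤ s j := hlamnn.trans hle
      have hfrac : lam / (1 - lam) ≤ 2 * s j := by
        rw [div_le_iff₀ (by linarith)]
        nlinarith
      calc |(∫ t in (x 0)..(x N), F j t) - J| ≤ lam / (1 - lam) * C := hbnd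
        _ ≤ 2 * s j * C := mul_le_mul_of_nonneg_right hfrac hCnn
    · have : Filter.Tendsto (fun j => 2 * s j * C) l (nhds (2 * 0 * C)) :=
        ((hs0.const_mul 2).mul_const C)
      simpa using this
  · -- part 3
    intro α hα0 fα hfα heq
    have hkey := key_identity N hN x hx f b hf hb α fα hfα heq
    have hz : (∑ i ∈ Finset.Icc 1 N, aCoef x N i * α i) = 0 :=
      Finset.sum_eq_zero fun i hi => by rw [hα0 i hi, mul_zero]
    rw [hz, zero_mul, add_zero] at hkey
    exact hkey
end

section
/- Let f_b^α be the α-fractal function of a continuous f : I = [x₀,x_N] → ℝ with base b (agreeing with f at the endpoints), a fixed partition, and scale vector α with |α_i| < 1. Let g : ℝ → ℝ be an affine map, g(t) = pt + q. Then g ∘ f_b^α is the α-fractal function of g ∘ f with base g ∘ b; that is, (g ∘ f)_{g∘b}^α = g ∘ f_b^α. -/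
theorem fractal_affine_composition (N : ℕ) (hN : 1 ≤ N) (x : ℕ → ℝ)
    (hx : ∀ i, i < N → x i < x (i + 1))
    (f b : ℝ → ℝ)
    (hf : ContinuousOn f (Set.Icc (x 0) (x N)))
    (hb : ContinuousOn b (Set.Icc (x 0) (x N)))
    (hb0 : b (x 0) = f (x 0)) (hbN : b (x N) = f (x N))
    (α : ℕ → ℝ) (hα : ∀ i ∈ Finset.Icc 1 N, |α i| < 1)
    (fα : ℝ → ℝ) (hfα : ContinuousOn fα (Set.Icc (x 0) (x N)))
    (hself : ∀ i ∈ Finset.Icc 1 N, ∀ t ∈ Set.Icc (x (i - 1)) (x i),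
      fα t = f t + α i * (fα (Linv x N i t) - b (Linv x N i t)))
    (p q : ℝ) (g : ℝ → ℝ) (hgdef : ∀ t, g t = p * t + q)
    (h : ℝ → ℝ) (hh : ContinuousOn h (Set.Icc (x 0) (x N)))
    (hselfh : ∀ i ∈ Finset.Icc 1 N, ∀ t ∈ Set.Icc (x (i - 1)) (x i),
      h t = g (f t) + α i * (h (Linv x N i t) - g (b (Linv x N i t)))) :
    ∀ t ∈ Set.Icc (x 0) (x N), h t = g (fα t) := by
  classical
  -- monotonicity
  have hmono : ∀ k, k ≤ N → ∀ j, j ≤ k → x j ≤ x k := by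
    intro k
    induction k with
    | zero => intro _ j hj; interval_cases j; exact le_rfl
    | succ n ih =>
      intro hkN j hj
      rcases Nat.eq_or_lt_of_le hj with h1 | h1
      · exact le_of_eq (by rw [h1])
      · have h2 : x j ≤ x n := ih (by omega) j (by omega)
        exact h2.trans (le_of_lt (hx n (by omega)))
  have h0N : x 0 < x N :=
    lt_of_lt_of_le (hx 0 (by omega)) (hmono N le_rfl 1 hN)
  have hsub : ∀ i, 1 ≤ i → i ≤ N → x (i - 1) < x i := by
    intro i h1 h2
    have := hx (i - 1) (by omega)
    have he : i - 1 + 1 = i := by omega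
    rwa [he] at this
  -- Linv maps subinterval into the big interval
  have hLinv : ∀ i, 1 ≤ i → i ≤ N → ∀ t ∈ Set.Icc (x (i - 1)) (x i),
      Linv x N i t ∈ Set.Icc (x 0) (x N) := by
    intro i h1 h2 t ht
    have hii := hsub i h1 h2
    have hden : x N - x 0 ≠ 0 := by linarith
    have ha : 0 < aCoef x N i := div_pos (by linarith) (by linarith)
    have key1 : x 0 * aCoef x N i = x (i - 1) - eCoef x N i := by
      unfold aCoef eCoef; field_simp; ring
    have key2 : x N * aCoef x N i = x i - eCoef x N i := by
      unfold aCoef eCoef; field_simp; ring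
    constructor
    · rw [Linv, le_div_iff₀ ha, key1]; linarith [ht.1]
    · rw [Linv, div_le_iff₀ ha, key2]; linarith [ht.2]
  -- contraction identity for D t = h t - (p * fα t + q)
  have hD : ∀ i, 1 ≤ i → i ≤ N → ∀ t ∈ Set.Icc (x (i - 1)) (x i),
      h t - (p * fα t + q) =
        α i * (h (Linv x N i t) - (p * fα (Linv x N i t) + q)) := by
    intro i h1 h2 t ht
    have hi : i ∈ Finset.Icc 1 N := Finset.mem_Icc.mpr ⟨h1, h2⟩
    have e1 := hself i hi t ht
    have e2 := hselfh i hi t ht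
    simp only [hgdef] at e2
    rw [e2, e1]; ring
  -- covering
  have hcover : ∀ t ∈ Set.Icc (x 0) (x N),
      ∃ i, 1 ≤ i ∧ i ≤ N ∧ t ∈ Set.Icc (x (i - 1)) (x i) := by
    intro t ht
    by_cases h0 : t ≤ x 0
    · exact ⟨1, le_rfl, hN, ht.1, h0.trans (hmono 1 hN 0 (by omega))⟩
    · have hex : ∃ i, i ≤ N ∧ t ≤ x i := ⟨N, le_rfl, ht.2⟩
      set i₀ := Nat.find hex with hi₀
      obtain ⟨hi₀N, hti₀⟩ := Nat.find_spec hex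
      have hpos : 1 ≤ i₀ := by
        by_contra hc
        have h00 : i₀ = 0 := by omega
        exact h0 (by rw [← h00]; exact hti₀)
      have hmin := Nat.find_min hex (show i₀ - 1 < i₀ by omega)
      push_neg at hmin
      have hlow : x (i₀ - 1) ≤ t := le_of_lt (hmin (by omega))
      exact ⟨i₀, hpos, hi₀N, hlow, hti₀⟩
  -- maximum of |D|
  have hDc : ContinuousOn (fun t => |h t - (p * fα t + q)|) (Set.Icc (x 0) (x N)) :=
    (hh.sub ((continuousOn_const.mul hfα).add continuousOn_const)).abs
  obtain ⟨t₀, ht₀, hmax⟩ := isCompact_Icc.exists_isMaxOn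
    (Set.nonempty_Icc.mpr h0N.le) hDc
  have hzero : |h t₀ - (p * fα t₀ + q)| ≤ 0 := by
    obtain ⟨i, h1, h2, hti⟩ := hcover t₀ ht₀
    have hαi := hα i (Finset.mem_Icc.mpr ⟨h1, h2⟩)
    have hmem := hLinv i h1 h2 t₀ hti
    have hle : |h (Linv x N i t₀) - (p * fα (Linv x N i t₀) + q)| ≤
        |h t₀ - (p * fα t₀ + q)| := hmax hmem
    have heq := hD i h1 h2 t₀ hti
    have : |h t₀ - (p * fα t₀ + q)| =
        |α i| * |h (Linv x N i t₀) - (p * fα (Linv x N i t₀) + q)| := by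
      rw [heq, abs_mul]
    nlinarith [abs_nonneg (α i), abs_nonneg (h t₀ - (p * fα t₀ + q)),
      abs_nonneg (h (Linv x N i t₀) - (p * fα (Linv x N i t₀) + q))]
  intro t ht
  have := (hmax ht).trans hzero
  have habs : |h t - (p * fα t + q)| = 0 := le_antisymm this (abs_nonneg _)
  have := abs_eq_zero.mp habs
  rw [hgdef]; linarith
end

section
/- Let f_b^α be the α-fractal function of a continuous f : I = [x₀,x_N] → ℝ with base b (agreeing with f at the endpoints), partition x₀ < ... < x_N, and scale vector α with |α_i| < 1 and λ = Σ a_i α_i ≠ 1, where a_i = (x_i − x_{i-1})/(x_N − x₀). If g : ℝ → ℝ is an affine map, then ∫_{x₀}^{x_N} (g ∘ f_b^α)(x) dx = (1/(1−λ)) ∫_{x₀}^{x_N} (g ∘ f)(x) dx − (λ/(1−λ)) ∫_{x₀}^{x_N} (g ∘ b)(x) dx. -/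
lemma L_left (x : ℕ → ℝ) (N i : ℕ) (h0 : x 0 < x N) :
    aCoef x N i * x 0 + eCoef x N i = x (i - 1) := by
  have hΔ : x N - x 0 ≠ 0 := sub_ne_zero.2 h0.ne'
  unfold aCoef eCoef; field_simp; ring

lemma L_right (x : ℕ → ℝ) (N i : ℕ) (h0 : x 0 < x N) :
    aCoef x N i * x N + eCoef x N i = x i := by
  have hΔ : x N - x 0 ≠ 0 := sub_ne_zero.2 h0.ne'
  unfold aCoef eCoef; field_simp; ring

lemma comp_Linv_integral (x : ℕ → ℝ) (N i : ℕ) (h0 : x 0 < x N) (hi : x (i - 1) < x i)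
    (φ : ℝ → ℝ) :
    ∫ t in (x (i - 1))..(x i), φ (Linv x N i t)
      = aCoef x N i * ∫ s in (x 0)..(x N), φ s := by
  have hΔ : x N - x 0 ≠ 0 := sub_ne_zero.2 h0.ne'
  have ha : aCoef x N i ≠ 0 := div_ne_zero (sub_ne_zero.2 hi.ne') hΔ
  have hc : (aCoef x N i)⁻¹ ≠ 0 := inv_ne_zero ha
  have hL : ∀ t, Linv x N i t
      = (aCoef x N i)⁻¹ * t + (-(eCoef x N i / aCoef x N i)) := by
    intro t; unfold Linv; field_simp; ring
  have e1 : (aCoef x N i)⁻¹ * x (i - 1) + -(eCoef x N i / aCoef x N i) = x 0 := by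
    have := L_left x N i h0
    field_simp
    linarith
  have e2 : (aCoef x N i)⁻¹ * x i + -(eCoef x N i / aCoef x N i) = x N := by
    have := L_right x N i h0
    field_simp
    linarith
  simp only [hL]
  rw [intervalIntegral.integral_comp_mul_add φ hc, e1, e2, inv_inv, smul_eq_mul]

lemma key_integral (N : ℕ) (hN : 1 ≤ N) (x : ℕ → ℝ)
    (hx : ∀ i, i < N → x i < x (i + 1))
    (f b fα : ℝ → ℝ)
    (hf : ContinuousOn f (Set.Icc (x 0) (x N)))
    (hb : ContinuousOn b (Set.Icc (x 0) (x N)))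
    (hfα : ContinuousOn fα (Set.Icc (x 0) (x N)))
    (α : ℕ → ℝ)
    (hself : ∀ i ∈ Finset.Icc 1 N, ∀ t ∈ Set.Icc (x (i - 1)) (x i),
      fα t = f t + α i * (fα (Linv x N i t) - b (Linv x N i t)))
    (Λ : ℝ) (hΛdef : Λ = ∑ i ∈ Finset.Icc 1 N, aCoef x N i * α i)
    (hΛ : Λ ≠ 1) :
    ∫ t in (x 0)..(x N), fα t =
      (1 / (1 - Λ)) * (∫ t in (x 0)..(x N), f t)
        - (Λ / (1 - Λ)) * ∫ t in (x 0)..(x N), b t := by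
  -- monotonicity
  have hle : ∀ i j, i ≤ j → j ≤ N → x i ≤ x j := by
    intro i j hij hjN
    induction j with
    | zero => have : i = 0 := by omega
              rw [this]
    | succ n ih =>
      rcases Nat.eq_or_lt_of_le hij with h | h
      · rw [h]
      · exact le_trans (ih (by omega) (by omega)) (hx n (by omega)).le
  have h0N : x 0 < x N := by
    have h1 := hx (N - 1) (by omega)
    have h2 := hle 0 (N - 1) (by omega) (by omega)
    have : N - 1 + 1 = N := by omega
    rw [this] at h1
    linarith
  have h1Λ : (1 : ℝ) - Λ ≠ 0 := sub_ne_zero.2 fun h => hΛ (by linarith [h.symm])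
  -- facts per index
  have hii : ∀ k, k < N → x k < x (k + 1) := hx
  have hsubset : ∀ k, k < N → Set.Icc (x k) (x (k + 1)) ⊆ Set.Icc (x 0) (x N) :=
    fun k hk => Set.Icc_subset_Icc (hle 0 k (by omega) (by omega))
      (hle (k + 1) N (by omega) le_rfl)
  -- integrability on subintervals
  have hint : ∀ (φ : ℝ → ℝ), ContinuousOn φ (Set.Icc (x 0) (x N)) →
      ∀ k, k < N → IntervalIntegrable φ MeasureTheory.volume (x k) (x (k + 1)) := by
    intro φ hφ k hk
    refine (hφ.mono (hsubset k hk)).intervalIntegrable_of_Icc (hx k hk).le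
  have hintfα := hint fα hfα
  have hintf := hint f hf
  have hintwhole : ∀ (φ : ℝ → ℝ), ContinuousOn φ (Set.Icc (x 0) (x N)) →
      IntervalIntegrable φ MeasureTheory.volume (x 0) (x N) :=
    fun φ hφ => hφ.intervalIntegrable_of_Icc h0N.le
  set F := ∫ t in (x 0)..(x N), fα t with hF
  set A := ∫ t in (x 0)..(x N), f t with hA
  set B := ∫ t in (x 0)..(x N), b t with hB
  -- mapsTo and composition integrability
  have hmaps : ∀ k, k < N →
      Set.MapsTo (Linv x N (k + 1)) (Set.Icc (x k) (x (k + 1))) (Set.Icc (x 0) (x N)) := by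
    intro k hk t ht
    have hapos : 0 < aCoef x N (k + 1) :=
      div_pos (sub_pos.2 (hx k hk)) (sub_pos.2 h0N)
    have h1 := L_left x N (k + 1) h0N
    have h2 := L_right x N (k + 1) h0N
    simp only [Nat.add_sub_cancel] at h1
    constructor
    · unfold Linv
      rw [le_div_iff₀ hapos]
      have := ht.1
      nlinarith
    · unfold Linv
      rw [div_le_iff₀ hapos]
      have := ht.2
      nlinarith
  have hcontLinv : ∀ k : ℕ, Continuous (Linv x N (k + 1)) := by
    intro k
    unfold Linv
    exact (continuous_id.sub continuous_const).div_const _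
  have hφcont : ContinuousOn (fun s => fα s - b s) (Set.Icc (x 0) (x N)) := hfα.sub hb
  have hintcomp : ∀ k, k < N →
      IntervalIntegrable (fun t => fα (Linv x N (k + 1) t) - b (Linv x N (k + 1) t))
        MeasureTheory.volume (x k) (x (k + 1)) := by
    intro k hk
    have : ContinuousOn (fun t => fα (Linv x N (k + 1) t) - b (Linv x N (k + 1) t))
        (Set.Icc (x k) (x (k + 1))) :=
      hφcont.comp ((hcontLinv k).continuousOn) (hmaps k hk)
    exact this.intervalIntegrable_of_Icc (hx k hk).le
  -- per-interval identity
  have hterm : ∀ k, k < N →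
      (∫ t in (x k)..(x (k + 1)), fα t)
        = (∫ t in (x k)..(x (k + 1)), f t)
          + α (k + 1) * (aCoef x N (k + 1) * (F - B)) := by
    intro k hk
    have hcongr : (∫ t in (x k)..(x (k + 1)), fα t)
        = ∫ t in (x k)..(x (k + 1)),
            (f t + α (k + 1) * (fα (Linv x N (k + 1) t) - b (Linv x N (k + 1) t))) := by
      apply intervalIntegral.integral_congr
      intro t ht
      rw [Set.uIcc_of_le (hx k hk).le] at ht
      have := hself (k + 1) (Finset.mem_Icc.2 ⟨by omega, by omega⟩) t
      simp only [Nat.add_sub_cancel] at this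
      exact this ht
    rw [hcongr]
    rw [intervalIntegral.integral_add (hintf k hk)
      (((hintcomp k hk).const_mul (α (k + 1))))]
    congr 1
    rw [intervalIntegral.integral_const_mul]
    congr 1
    have hsub : (∫ t in (x k)..(x (k + 1)),
        (fun s => fα s - b s) (Linv x N (k + 1) t))
        = aCoef x N (k + 1) * ∫ s in (x 0)..(x N), (fα s - b s) := by
      have := comp_Linv_integral x N (k + 1) h0N (by simpa using hx k hk)
        (fun s => fα s - b s)
      simpa using this
    rw [show (fun t => fα (Linv x N (k+1) t) - b (Linv x N (k+1) t))
        = (fun t => (fun s => fα s - b s) (Linv x N (k+1) t)) from rfl] at *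
    rw [hsub, intervalIntegral.integral_sub (hintwhole fα hfα) (hintwhole b hb)]
  -- sum it up
  have hsumfα : ∑ k ∈ Finset.range N, ∫ t in (x k)..(x (k + 1)), fα t = F :=
    intervalIntegral.sum_integral_adjacent_intervals hintfα
  have hsumf : ∑ k ∈ Finset.range N, ∫ t in (x k)..(x (k + 1)), f t = A :=
    intervalIntegral.sum_integral_adjacent_intervals hintf
  have hΛ' : Λ = ∑ k ∈ Finset.range N, aCoef x N (k + 1) * α (k + 1) := by
    rw [hΛdef, show Finset.Icc 1 N = Finset.Ico 1 (N + 1) by rw [Finset.Ico_add_one_right_eq_Icc],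
      Finset.sum_Ico_eq_sum_range]
    simp [add_comm]
  have hkey : F = A + Λ * (F - B) := by
    calc F = ∑ k ∈ Finset.range N, ∫ t in (x k)..(x (k + 1)), fα t := hsumfα.symm
    _ = ∑ k ∈ Finset.range N, ((∫ t in (x k)..(x (k + 1)), f t)
          + α (k + 1) * (aCoef x N (k + 1) * (F - B))) :=
        Finset.sum_congr rfl fun k hk => hterm k (Finset.mem_range.1 hk)
    _ = A + Λ * (F - B) := by
        rw [Finset.sum_add_distrib, hsumf, hΛ', Finset.sum_mul]
        congr 1
        exact Finset.sum_congr rfl fun k _ => by ring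
  have hkey' : F = A + Λ * F - Λ * B := by linear_combination hkey
  have hgoal : F = (A - Λ * B) / (1 - Λ) := by
    rw [eq_div_iff h1Λ]
    linear_combination hkey'
  rw [hgoal]
  ring

theorem integral_affine_composed_fractal (N : ℕ) (hN : 1 ≤ N) (x : ℕ → ℝ)
    (hx : ∀ i, i < N → x i < x (i + 1))
    (f b : ℝ → ℝ)
    (hf : ContinuousOn f (Set.Icc (x 0) (x N)))
    (hb : ContinuousOn b (Set.Icc (x 0) (x N)))
    (hb0 : b (x 0) = f (x 0)) (hbN : b (x N) = f (x N))
    (α : ℕ → ℝ) (hα : ∀ i ∈ Finset.Icc 1 N, |α i| < 1)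
    (fα : ℝ → ℝ) (hfα : ContinuousOn fα (Set.Icc (x 0) (x N)))
    (hself : ∀ i ∈ Finset.Icc 1 N, ∀ t ∈ Set.Icc (x (i - 1)) (x i),
      fα t = f t + α i * (fα (Linv x N i t) - b (Linv x N i t)))
    (p q : ℝ) (g : ℝ → ℝ) (hgdef : ∀ t, g t = p * t + q)
    (Λ : ℝ) (hΛdef : Λ = ∑ i ∈ Finset.Icc 1 N, aCoef x N i * α i)
    (hΛ : Λ ≠ 1) :
    ∫ t in (x 0)..(x N), g (fα t) =
      (1 / (1 - Λ)) * (∫ t in (x 0)..(x N), g (f t))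
        - (Λ / (1 - Λ)) * ∫ t in (x 0)..(x N), g (b t) := by
  simp only [hgdef]
  refine key_integral N hN x hx (fun t => p * f t + q) (fun t => p * b t + q)
    (fun t => p * fα t + q) ?_ ?_ ?_ α ?_ Λ hΛdef hΛ
  · exact (continuousOn_const.mul hf).add continuousOn_const
  · exact (continuousOn_const.mul hb).add continuousOn_const
  · exact (continuousOn_const.mul hfα).add continuousOn_const
  · intro i hi t ht
    have := hself i hi t ht
    beta_reduce
    rw [this]
    ring
end

section
/- With the setup of the flipped α-fractal function: let f^α be the α-fractal function of continuous f : [x₀,x_N] → ℝ with base b (agreeing with f at the endpoints), partition x₀ < ... < x_N and scale vector α with |α_i| < 1 and λ = Σ a_i α_i ≠ 1, and let f_F^{α_F} be the flipped α-fractal function on [−x_N, −x₀] built from f_F(x) = f(−x), b_F(x) = b(−x), the reversed partition, and reversed scale vector α_F = (α_N,...,α₁). Then ∫_{−x_N}^{−x₀} f_F^{α_F}(x) dx = ∫_{x₀}^{x_N} f^α(x) dx. -/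
/-- The flipped affine map `(L_F) i t = aCoef (N+1-i) * t - eCoef (N+1-i)`,
sending `[-x N, -x 0]` onto `[-x (N+1-i), -x (N-i)]`. -/
noncomputable def LF (x : ℕ → ℝ) (N i : ℕ) (t : ℝ) : ℝ :=
  aCoef x N (N + 1 - i) * t - eCoef x N (N + 1 - i)

/-- Inverse of the flipped affine map `LF`. -/
noncomputable def LFinv (x : ℕ → ℝ) (N i : ℕ) (t : ℝ) : ℝ :=
  (t + eCoef x N (N + 1 - i)) / aCoef x N (N + 1 - i)

lemma integral_selfref (N : ℕ) (hN : 1 ≤ N) (y : ℕ → ℝ)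
    (hy : ∀ i, i < N → y i < y (i + 1))
    (F base g : ℝ → ℝ)
    (hF : ContinuousOn F (Set.Icc (y 0) (y N)))
    (hbase : ContinuousOn base (Set.Icc (y 0) (y N)))
    (hg : ContinuousOn g (Set.Icc (y 0) (y N)))
    (β : ℕ → ℝ)
    (hself : ∀ i ∈ Finset.Icc 1 N, ∀ t ∈ Set.Icc (y (i - 1)) (y i),
      g t = F t + β i * (g (Linv y N i t) - base (Linv y N i t))) :
    ∫ t in (y 0)..(y N), g t =
      (∫ t in (y 0)..(y N), F t) +
        (∑ i ∈ Finset.Icc 1 N, aCoef y N i * β i) *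
          ((∫ t in (y 0)..(y N), g t) - ∫ t in (y 0)..(y N), base t) := by
  -- monotonicity
  have hle : ∀ i j : ℕ, i ≤ j → j ≤ N → y i ≤ y j := by
    intro i j hij hjN
    induction j with
    | zero => simp [Nat.le_zero.mp hij]
    | succ n ih =>
      rcases Nat.lt_succ_iff_lt_or_eq.mp (Nat.lt_succ_of_le hij) with h | h
      · exact le_trans (ih (by omega) (by omega)) (hy n (by omega)).le
      · simp [h]
  have h0N : y 0 < y N := by
    have h1 := hy (N - 1) (by omega)
    have h2 : y 0 ≤ y (N - 1) := hle 0 (N - 1) (by omega) (by omega)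
    have h3 : N - 1 + 1 = N := by omega
    rw [h3] at h1; linarith
  have hD : (0:ℝ) < y N - y 0 := by linarith
  have ha : ∀ k, k < N → 0 < aCoef y N (k + 1) := by
    intro k hk
    have := hy k hk
    unfold aCoef
    simp only [Nat.add_sub_cancel]
    exact div_pos (by linarith) hD
  have hL0 : ∀ k, k < N → Linv y N (k + 1) (y k) = y 0 := by
    intro k hk
    have h1 := (hy k hk).ne'
    unfold Linv eCoef aCoef
    simp only [Nat.add_sub_cancel]
    field_simp [sub_ne_zero.mpr h1, hD.ne']
    ring
  have hL1 : ∀ k, k < N → Linv y N (k + 1) (y (k + 1)) = y N := by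
    intro k hk
    have h1 := (hy k hk).ne'
    unfold Linv eCoef aCoef
    simp only [Nat.add_sub_cancel]
    field_simp [sub_ne_zero.mpr h1, hD.ne']
    ring
  have hmaps : ∀ k, k < N → Set.MapsTo (Linv y N (k + 1))
      (Set.Icc (y k) (y (k + 1))) (Set.Icc (y 0) (y N)) := by
    intro k hk t ht
    have hak := ha k hk
    constructor
    · rw [← hL0 k hk]
      unfold Linv
      gcongr
      exact ht.1
    · rw [← hL1 k hk]
      unfold Linv
      gcongr
      exact ht.2
  have hsub : ∀ k, k < N → Set.Icc (y k) (y (k + 1)) ⊆ Set.Icc (y 0) (y N) :=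
    fun k hk => Set.Icc_subset_Icc (hle 0 k (by omega) (by omega))
      (hle (k + 1) N (by omega) le_rfl)
  have hkk : ∀ k, k < N → y k ≤ y (k + 1) := fun k hk => (hy k hk).le
  -- integrability
  have hgI : ∀ k, k < N → IntervalIntegrable g MeasureTheory.volume (y k) (y (k + 1)) :=
    fun k hk => (hg.mono (hsub k hk)).intervalIntegrable_of_Icc (hkk k hk)
  have hFI : ∀ k, k < N → IntervalIntegrable F MeasureTheory.volume (y k) (y (k + 1)) :=
    fun k hk => (hF.mono (hsub k hk)).intervalIntegrable_of_Icc (hkk k hk)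
  have hHI : ∀ k, k < N → IntervalIntegrable
      (fun t => β (k + 1) * (g (Linv y N (k + 1) t) - base (Linv y N (k + 1) t)))
      MeasureTheory.volume (y k) (y (k + 1)) := by
    intro k hk
    have hLc : Continuous (Linv y N (k + 1)) := by
      unfold Linv; fun_prop
    have : ContinuousOn
        (fun t => β (k + 1) * (g (Linv y N (k + 1) t) - base (Linv y N (k + 1) t)))
        (Set.Icc (y k) (y (k + 1))) := by
      apply ContinuousOn.mul continuousOn_const
      exact ((hg.comp hLc.continuousOn (hmaps k hk)).sub
        (hbase.comp hLc.continuousOn (hmaps k hk)))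
    exact this.intervalIntegrable_of_Icc (hkk k hk)
  -- change of variables on each piece
  have cov : ∀ k, k < N →
      (∫ t in (y k)..(y (k + 1)), (g (Linv y N (k + 1) t) - base (Linv y N (k + 1) t))) =
        aCoef y N (k + 1) * ((∫ t in (y 0)..(y N), g t) - ∫ t in (y 0)..(y N), base t) := by
    intro k hk
    have hak := (ha k hk).ne'
    set H : ℝ → ℝ := fun u => g u - base u with hH
    have h1 : ∀ t : ℝ, Linv y N (k + 1) t = (t - eCoef y N (k + 1)) / aCoef y N (k + 1) :=
      fun t => rfl
    calc (∫ t in (y k)..(y (k + 1)), H (Linv y N (k + 1) t))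
        = ∫ t in (y k)..(y (k + 1)),
            (fun s => H (s / aCoef y N (k + 1))) (t - eCoef y N (k + 1)) := by
          simp only [h1]
      _ = ∫ t in (y k - eCoef y N (k + 1))..(y (k + 1) - eCoef y N (k + 1)),
            H (t / aCoef y N (k + 1)) :=
          intervalIntegral.integral_comp_sub_right (fun s => H (s / aCoef y N (k + 1))) _
      _ = aCoef y N (k + 1) • ∫ t in
            ((y k - eCoef y N (k + 1)) / aCoef y N (k + 1)).. ((y (k + 1) - eCoef y N (k + 1)) / aCoef y N (k + 1)), H t :=
          intervalIntegral.integral_comp_div H hak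
      _ = aCoef y N (k + 1) * ∫ t in (y 0)..(y N), H t := by
          rw [show (y k - eCoef y N (k + 1)) / aCoef y N (k + 1) = Linv y N (k + 1) (y k) from rfl,
            show (y (k + 1) - eCoef y N (k + 1)) / aCoef y N (k + 1) = Linv y N (k + 1) (y (k + 1)) from rfl,
            hL0 k hk, hL1 k hk, smul_eq_mul]
      _ = aCoef y N (k + 1) * ((∫ t in (y 0)..(y N), g t) - ∫ t in (y 0)..(y N), base t) := by
          rw [hH, intervalIntegral.integral_sub
            (hg.intervalIntegrable_of_Icc h0N.le) (hbase.intervalIntegrable_of_Icc h0N.le)]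
  -- piecewise identity
  have piece : ∀ k, k < N →
      (∫ t in (y k)..(y (k + 1)), g t) =
        (∫ t in (y k)..(y (k + 1)), F t) +
          aCoef y N (k + 1) * β (k + 1) *
            ((∫ t in (y 0)..(y N), g t) - ∫ t in (y 0)..(y N), base t) := by
    intro k hk
    have hcong : Set.EqOn g
        (fun t => F t + β (k + 1) * (g (Linv y N (k + 1) t) - base (Linv y N (k + 1) t)))
        (Set.uIcc (y k) (y (k + 1))) := by
      rw [Set.uIcc_of_le (hkk k hk)]
      intro t ht
      have := hself (k + 1) (by simp; omega) t (by simpa using ht)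
      simpa using this
    rw [intervalIntegral.integral_congr hcong,
      intervalIntegral.integral_add (hFI k hk) (hHI k hk),
      intervalIntegral.integral_const_mul, cov k hk]
    ring
  -- sum up
  have split_g := intervalIntegral.sum_integral_adjacent_intervals (μ := MeasureTheory.volume)
    (f := g) (a := y) (n := N) hgI
  have split_F := intervalIntegral.sum_integral_adjacent_intervals (μ := MeasureTheory.volume)
    (f := F) (a := y) (n := N) hFI
  have hsum : ∑ i ∈ Finset.Icc 1 N, aCoef y N i * β i =
      ∑ k ∈ Finset.range N, aCoef y N (k + 1) * β (k + 1) := by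
    rw [← Finset.Ico_add_one_right_eq_Icc, Finset.sum_Ico_eq_sum_range]
    simp [Nat.add_comm 1]
  conv_lhs => rw [← split_g,
    Finset.sum_congr rfl (fun k hk => piece k (Finset.mem_range.mp hk)),
    Finset.sum_add_distrib, ← Finset.sum_mul]
  rw [split_F, hsum]

theorem integral_flipped_fractal (N : ℕ) (hN : 1 ≤ N) (x : ℕ → ℝ)
    (hx : ∀ i, i < N → x i < x (i + 1))
    (f b : ℝ → ℝ)
    (hf : ContinuousOn f (Set.Icc (x 0) (x N)))
    (hb : ContinuousOn b (Set.Icc (x 0) (x N)))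
    (hb0 : b (x 0) = f (x 0)) (hbN : b (x N) = f (x N))
    (α : ℕ → ℝ) (hα : ∀ i ∈ Finset.Icc 1 N, |α i| < 1)
    (fα : ℝ → ℝ) (hfα : ContinuousOn fα (Set.Icc (x 0) (x N)))
    (hself : ∀ i ∈ Finset.Icc 1 N, ∀ t ∈ Set.Icc (x (i - 1)) (x i),
      fα t = f t + α i * (fα (Linv x N i t) - b (Linv x N i t)))
    (fF : ℝ → ℝ) (hfF : ContinuousOn fF (Set.Icc (-x N) (-x 0)))
    (hselfF : ∀ i ∈ Finset.Icc 1 N, ∀ t ∈ Set.Icc (-x (N + 1 - i)) (-x (N - i)),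
      fF t = f (-t) +
        α (N + 1 - i) * (fF (LFinv x N i t) - b (-(LFinv x N i t))))
    (Λ : ℝ) (hΛdef : Λ = ∑ i ∈ Finset.Icc 1 N, aCoef x N i * α i)
    (hΛ : Λ ≠ 1) :
    ∫ t in (-x N)..(-x 0), fF t = ∫ t in (x 0)..(x N), fα t := by
  -- the flipped partition
  set y : ℕ → ℝ := fun j => -x (N - j) with hy_def
  have hy0 : y 0 = -x N := by simp [hy_def]
  have hyN : y N = -x 0 := by simp [hy_def]
  have hyy : ∀ i, i < N → y i < y (i + 1) := by
    intro i hi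
    have e : N - (i + 1) + 1 = N - i := by omega
    have h := hx (N - (i + 1)) (by omega)
    rw [e] at h
    simp only [hy_def]
    linarith
  -- coefficient identities
  have haeq : ∀ i, 1 ≤ i → i ≤ N → aCoef y N i = aCoef x N (N + 1 - i) := by
    intro i h1 h2
    have e1 : N - (i - 1) = N + 1 - i := by omega
    have e2 : N + 1 - i - 1 = N - i := by omega
    simp only [aCoef, hy_def, Nat.sub_self, Nat.sub_zero, e1, e2]
    congr 1 <;> ring
  have heeq : ∀ i, 1 ≤ i → i ≤ N → eCoef y N i = -eCoef x N (N + 1 - i) := by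
    intro i h1 h2
    have e1 : N - (i - 1) = N + 1 - i := by omega
    have e2 : N + 1 - i - 1 = N - i := by omega
    simp only [eCoef, hy_def, Nat.sub_self, Nat.sub_zero, e1, e2]
    rw [← neg_div]
    congr 1 <;> ring
  have hLinv : ∀ i, 1 ≤ i → i ≤ N → ∀ t, Linv y N i t = LFinv x N i t := by
    intro i h1 h2 t
    unfold Linv LFinv
    rw [haeq i h1 h2, heeq i h1 h2, sub_neg_eq_add]
  -- continuity on the flipped interval
  have hIcc : Set.Icc (y 0) (y N) = Set.Icc (-x N) (-x 0) := by rw [hy0, hyN]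
  have hnegmaps : Set.MapsTo (fun t : ℝ => -t) (Set.Icc (-x N) (-x 0))
      (Set.Icc (x 0) (x N)) := by
    intro t ht
    simp only [Set.mem_Icc] at ht
    show -t ∈ Set.Icc (x 0) (x N)
    rw [Set.mem_Icc]
    constructor <;> linarith [ht.1, ht.2]
  have hFc : ContinuousOn (fun t => f (-t)) (Set.Icc (y 0) (y N)) := by
    rw [hIcc]; exact hf.comp continuous_neg.continuousOn hnegmaps
  have hBc : ContinuousOn (fun t => b (-t)) (Set.Icc (y 0) (y N)) := by
    rw [hIcc]; exact hb.comp continuous_neg.continuousOn hnegmaps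
  have hfFc : ContinuousOn fF (Set.Icc (y 0) (y N)) := by rw [hIcc]; exact hfF
  -- the flipped self-referential equation in the form needed
  have hselfy : ∀ i ∈ Finset.Icc 1 N, ∀ t ∈ Set.Icc (y (i - 1)) (y i),
      fF t = (fun t => f (-t)) t + α (N + 1 - i) *
        (fF (Linv y N i t) - (fun t => b (-t)) (Linv y N i t)) := by
    intro i hi t ht
    obtain ⟨h1, h2⟩ := Finset.mem_Icc.mp hi
    have e1 : N - (i - 1) = N + 1 - i := by omega
    have ht' : t ∈ Set.Icc (-x (N + 1 - i)) (-x (N - i)) := by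
      simpa only [hy_def, e1] using ht
    have := hselfF i hi t ht'
    simpa only [hLinv i h1 h2 t] using this
  -- apply the key lemma twice
  have h1 := integral_selfref N hN x hx f b fα hf hb hfα α hself
  have h2 := integral_selfref N hN y hyy (fun t => f (-t)) (fun t => b (-t)) fF
    hFc hBc hfFc (fun i => α (N + 1 - i)) hselfy
  rw [hy0, hyN] at h2
  -- identify the sums
  have hsum : ∑ i ∈ Finset.Icc 1 N, aCoef y N i * α (N + 1 - i) = Λ := by
    rw [Finset.sum_congr rfl (fun i hi => by
      rw [haeq i (Finset.mem_Icc.mp hi).1 (Finset.mem_Icc.mp hi).2]), hΛdef]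
    refine Finset.sum_nbij' (fun k => N + 1 - k) (fun k => N + 1 - k) ?_ ?_ ?_ ?_ ?_ <;>
      intro a ha <;> simp only [Finset.mem_Icc] at * <;>
      first
        | omega
        | (congr 1 <;> congr 1 <;> omega)
  -- identify the integrals of f and b
  have hfint : (∫ t in (-x N)..(-x 0), f (-t)) = ∫ t in (x 0)..(x N), f t := by
    rw [intervalIntegral.integral_comp_neg]; simp
  have hbint : (∫ t in (-x N)..(-x 0), b (-t)) = ∫ t in (x 0)..(x N), b t := by
    rw [intervalIntegral.integral_comp_neg]; simp
  rw [hsum, hfint, hbint] at h2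
  rw [← hΛdef] at h1
  -- solve the linear system
  have h4 : (1 - Λ) * ((∫ t in (-x N)..(-x 0), fF t) - ∫ t in (x 0)..(x N), fα t) = 0 := by
    linear_combination h2 - h1
  rcases mul_eq_zero.mp h4 with h | h
  · exact absurd (by linarith : Λ = 1) hΛ
  · linarith
end

section
/- Let I = [x₀,x_N] with partition x₀ < ... < x_N, f, b : I → ℝ continuous with b(x₀) = f(x₀), b(x_N) = f(x_N), and α = (α₁,...,α_N) with |α_i| < 1. Define the Read–Bajraktarević operator T on the space C* = {g ∈ C(I) : g(x₀) = f(x₀), g(x_N) = f(x_N)} by (Tg)(x) = f(x) + α_i (g − b)(L_i^{-1}(x)) for x ∈ [x_{i-1},x_i], where L_i is the increasing affine bijection of I onto [x_{i-1},x_i]. Then T is well defined (Tg is continuous and agrees with f at the endpoints) and is a contraction on C* with respect to the sup norm, with contraction factor max_i |α_i| < 1; hence T has a unique fixed point f^α ∈ C*. -/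
/-- The value of the Read–Bajraktarević operator on piece `i`. -/
noncomputable def RBPhi (x : ℕ → ℝ) (N : ℕ) (f b : ℝ → ℝ) (α : ℕ → ℝ) (g : ℝ → ℝ)
    (i : ℕ) (t : ℝ) : ℝ :=
  f t + α i * (g (Linv x N i t) - b (Linv x N i t))

/-- Index of the piece containing `t`: the largest `i ∈ [1,N]` with `x (i-1) ≤ t`. -/
noncomputable def RBidx (x : ℕ → ℝ) (N : ℕ) (t : ℝ) : ℕ :=
  ((((Finset.Icc 1 N).filter (fun i => x (i - 1) ≤ t)).max).getD 1)

/-- The Read–Bajraktarević operator. -/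
noncomputable def RBT (x : ℕ → ℝ) (N : ℕ) (f b : ℝ → ℝ) (α : ℕ → ℝ) (g : ℝ → ℝ)
    (t : ℝ) : ℝ :=
  RBPhi x N f b α g (RBidx x N t) t

section aux

variable {x : ℕ → ℝ} {N : ℕ}

lemma xle (hx : ∀ i, i < N → x i < x (i + 1)) {i j : ℕ} (hij : i ≤ j) (hj : j ≤ N) :
    x i ≤ x j := by
  induction j with
  | zero => cases Nat.le_zero.mp hij; exact le_refl _
  | succ n ih =>
    rcases Nat.lt_or_ge i (n + 1) with h | h
    · exact (ih (by omega) (by omega)).trans (le_of_lt (hx n (by omega)))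
    · have : i = n + 1 := le_antisymm hij h
      simp [this]

lemma xlt (hx : ∀ i, i < N → x i < x (i + 1)) {i j : ℕ} (hij : i < j) (hj : j ≤ N) :
    x i < x j := by
  have h1 : x i ≤ x (j - 1) := xle hx (by omega) (by omega)
  have h2 : x (j - 1) < x j := by
    have := hx (j - 1) (by omega)
    rwa [Nat.sub_add_cancel (by omega : 1 ≤ j)] at this
  exact h1.trans_lt h2

lemma aCoef_pos (hx : ∀ i, i < N → x i < x (i + 1)) (hN : 1 ≤ N) {i : ℕ}
    (h1 : 1 ≤ i) (h2 : i ≤ N) : 0 < aCoef x N i := by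
  apply div_pos
  · have := xlt hx (by omega : i - 1 < i) h2; linarith
  · have := xlt hx (by omega : 0 < N) le_rfl; linarith

lemma Linv_left (hx : ∀ i, i < N → x i < x (i + 1)) (hN : 1 ≤ N) {i : ℕ}
    (h1 : 1 ≤ i) (h2 : i ≤ N) : Linv x N i (x (i - 1)) = x 0 := by
  have ha : aCoef x N i ≠ 0 := ne_of_gt (aCoef_pos hx hN h1 h2)
  have hd : x N - x 0 ≠ 0 := by
    have := xlt hx (by omega : 0 < N) le_rfl; linarith
  rw [Linv, div_eq_iff ha, eCoef, aCoef]
  field_simp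
  ring

lemma Linv_right (hx : ∀ i, i < N → x i < x (i + 1)) (hN : 1 ≤ N) {i : ℕ}
    (h1 : 1 ≤ i) (h2 : i ≤ N) : Linv x N i (x i) = x N := by
  have ha : aCoef x N i ≠ 0 := ne_of_gt (aCoef_pos hx hN h1 h2)
  have hd : x N - x 0 ≠ 0 := by
    have := xlt hx (by omega : 0 < N) le_rfl; linarith
  rw [Linv, div_eq_iff ha, eCoef, aCoef]
  field_simp
  ring

lemma Linv_mem (hx : ∀ i, i < N → x i < x (i + 1)) (hN : 1 ≤ N) {i : ℕ}
    (h1 : 1 ≤ i) (h2 : i ≤ N) {t : ℝ} (ht : t ∈ Set.Icc (x (i - 1)) (x i)) :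
    Linv x N i t ∈ Set.Icc (x 0) (x N) := by
  have ha : 0 < aCoef x N i := aCoef_pos hx hN h1 h2
  constructor
  · rw [← Linv_left hx hN h1 h2]
    unfold Linv
    gcongr
    exact ht.1
  · rw [← Linv_right hx hN h1 h2]
    unfold Linv
    gcongr
    exact ht.2

end aux

section aux2

variable {x : ℕ → ℝ} {N : ℕ} {f b : ℝ → ℝ} {α : ℕ → ℝ}

/-- Matching at the right endpoint of piece `i`. -/
lemma RBPhi_right (hx : ∀ i, i < N → x i < x (i + 1)) (hN : 1 ≤ N) {g : ℝ → ℝ}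
    (hgN : g (x N) = f (x N)) (hbN : b (x N) = f (x N)) {i : ℕ}
    (h1 : 1 ≤ i) (h2 : i ≤ N) : RBPhi x N f b α g i (x i) = f (x i) := by
  rw [RBPhi, Linv_right hx hN h1 h2, hgN, hbN]; ring

/-- Matching at the left endpoint of piece `i`. -/
lemma RBPhi_left (hx : ∀ i, i < N → x i < x (i + 1)) (hN : 1 ≤ N) {g : ℝ → ℝ}
    (hg0 : g (x 0) = f (x 0)) (hb0 : b (x 0) = f (x 0)) {i : ℕ}
    (h1 : 1 ≤ i) (h2 : i ≤ N) : RBPhi x N f b α g i (x (i - 1)) = f (x (i - 1)) := by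
  rw [RBPhi, Linv_left hx hN h1 h2, hg0, hb0]; ring

/-- On each piece, `RBT` is given by the formula with the corresponding index. -/
lemma RBT_eq (hx : ∀ i, i < N → x i < x (i + 1)) (hN : 1 ≤ N) {g : ℝ → ℝ}
    (hg0 : g (x 0) = f (x 0)) (hgN : g (x N) = f (x N))
    (hb0 : b (x 0) = f (x 0)) (hbN : b (x N) = f (x N))
    {j : ℕ} (hj1 : 1 ≤ j) (hj2 : j ≤ N) {t : ℝ} (ht : t ∈ Set.Icc (x (j - 1)) (x j)) :
    RBT x N f b α g t = RBPhi x N f b α g j t := by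
  set s := (Finset.Icc 1 N).filter (fun i => x (i - 1) ≤ t) with hs
  have hjs : j ∈ s := by
    simp only [hs, Finset.mem_filter, Finset.mem_Icc]
    exact ⟨⟨hj1, hj2⟩, ht.1⟩
  obtain ⟨m, hm⟩ := Finset.max_of_nonempty ⟨j, hjs⟩
  have hidx : RBidx x N t = m := by rw [RBidx, ← hs, hm]; rfl
  have hms : m ∈ s := Finset.mem_of_max hm
  have hjm : j ≤ m := by exact_mod_cast Finset.le_max_of_eq hjs hm
  simp only [hs, Finset.mem_filter, Finset.mem_Icc] at hms
  obtain ⟨⟨hm1, hm2⟩, hmt⟩ := hms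
  rcases eq_or_lt_of_le hjm with h | h
  · rw [RBT, hidx, ← h]
  · -- j < m; then t = x j = x (m-1), forcing m = j + 1
    have h1 : x j ≤ x (m - 1) := xle hx (by omega) (by omega)
    have h2 : t = x j := le_antisymm ht.2 (le_trans h1 hmt)
    have h3 : x (m - 1) = x j := by rw [h2] at hmt; exact le_antisymm hmt h1
    have hmj : m - 1 = j := by
      by_contra hne
      have : x j < x (m - 1) := xlt hx (by omega) (by omega)
      linarith [h3]
    rw [RBT, hidx, h2]
    have e1 : RBPhi x N f b α g m (x j) = f (x j) := by
      have := RBPhi_left hx hN hg0 hb0 hm1 hm2 (α := α)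
      rwa [hmj] at this
    have e2 : RBPhi x N f b α g j (x j) = f (x j) :=
      RBPhi_right hx hN hgN hbN hj1 hj2
    rw [e1, e2]

/-- Pasting continuity on a union of two closed sets. -/
lemma contOn_union {F : ℝ → ℝ} {s t : Set ℝ} (hs : IsClosed s) (ht : IsClosed t)
    (h1 : ContinuousOn F s) (h2 : ContinuousOn F t) : ContinuousOn F (s ∪ t) := by
  intro y hy
  refine ContinuousWithinAt.union ?_ ?_
  · by_cases h : y ∈ s
    · exact h1 y h
    · exact continuousWithinAt_of_notMem_closure (by rwa [hs.closure_eq])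
  · by_cases h : y ∈ t
    · exact h2 y h
    · exact continuousWithinAt_of_notMem_closure (by rwa [ht.closure_eq])

lemma Linv_cont {i : ℕ} : Continuous (Linv x N i) := by
  unfold Linv
  exact (continuous_id.sub continuous_const).div_const _

/-- Each piece function is continuous on its piece. -/
lemma RBPhi_cont (hx : ∀ i, i < N → x i < x (i + 1)) (hN : 1 ≤ N)
    (hf : ContinuousOn f (Set.Icc (x 0) (x N)))
    (hb : ContinuousOn b (Set.Icc (x 0) (x N)))
    {g : ℝ → ℝ} (hg : ContinuousOn g (Set.Icc (x 0) (x N)))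
    {i : ℕ} (h1 : 1 ≤ i) (h2 : i ≤ N) :
    ContinuousOn (RBPhi x N f b α g i) (Set.Icc (x (i - 1)) (x i)) := by
  have hsub : Set.Icc (x (i - 1)) (x i) ⊆ Set.Icc (x 0) (x N) :=
    Set.Icc_subset_Icc (xle hx (by omega) (by omega)) (xle hx h2 le_rfl)
  have hmaps : Set.MapsTo (Linv x N i) (Set.Icc (x (i - 1)) (x i)) (Set.Icc (x 0) (x N)) :=
    fun t ht => Linv_mem hx hN h1 h2 ht
  have hgl : ContinuousOn (fun t => g (Linv x N i t)) (Set.Icc (x (i - 1)) (x i)) :=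
    hg.comp Linv_cont.continuousOn hmaps
  have hbl : ContinuousOn (fun t => b (Linv x N i t)) (Set.Icc (x (i - 1)) (x i)) :=
    hb.comp Linv_cont.continuousOn hmaps
  exact (hf.mono hsub).add (continuousOn_const.mul (hgl.sub hbl))

/-- `RBT g` is continuous on `[x 0, x N]`. -/
lemma RBT_cont (hx : ∀ i, i < N → x i < x (i + 1)) (hN : 1 ≤ N)
    (hf : ContinuousOn f (Set.Icc (x 0) (x N)))
    (hb : ContinuousOn b (Set.Icc (x 0) (x N)))
    (hb0 : b (x 0) = f (x 0)) (hbN : b (x N) = f (x N))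
    {g : ℝ → ℝ} (hg : ContinuousOn g (Set.Icc (x 0) (x N)))
    (hg0 : g (x 0) = f (x 0)) (hgN : g (x N) = f (x N)) :
    ContinuousOn (RBT x N f b α g) (Set.Icc (x 0) (x N)) := by
  have hpiece : ∀ i, 1 ≤ i → i ≤ N →
      ContinuousOn (RBT x N f b α g) (Set.Icc (x (i - 1)) (x i)) := by
    intro i h1 h2
    exact (RBPhi_cont hx hN hf hb hg h1 h2).congr
      (fun t ht => RBT_eq hx hN hg0 hgN hb0 hbN h1 h2 ht)
  have key : ∀ k, 1 ≤ k → k ≤ N → ContinuousOn (RBT x N f b α g) (Set.Icc (x 0) (x k)) := by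
    intro k
    induction k with
    | zero => omega
    | succ n ih =>
      intro _ h2
      rcases Nat.eq_or_lt_of_le (by omega : 0 ≤ n) with h | h
      · have := hpiece 1 le_rfl (by omega)
        simpa [← h] using this
      · have hu : Set.Icc (x 0) (x n) ∪ Set.Icc (x n) (x (n + 1)) = Set.Icc (x 0) (x (n + 1)) :=
          Set.Icc_union_Icc_eq_Icc (xle hx (by omega) (by omega))
            (le_of_lt (hx n (by omega)))
        rw [← hu]
        refine contOn_union isClosed_Icc isClosed_Icc (ih (by omega) (by omega)) ?_
        have := hpiece (n + 1) (by omega) h2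
        simpa using this
  exact key N hN le_rfl

/-- Every point of `[x 0, x N]` lies in some piece. -/
lemma exists_piece (hx : ∀ i, i < N → x i < x (i + 1)) (hN : 1 ≤ N) {t : ℝ}
    (ht : t ∈ Set.Icc (x 0) (x N)) :
    ∃ j, 1 ≤ j ∧ j ≤ N ∧ x (j - 1) ≤ t ∧ t ≤ x j := by
  set s := (Finset.Icc 1 N).filter (fun i => x (i - 1) ≤ t) with hs
  have h1s : 1 ∈ s := by
    simp only [hs, Finset.mem_filter, Finset.mem_Icc]
    exact ⟨⟨le_rfl, hN⟩, ht.1⟩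
  obtain ⟨m, hm⟩ := Finset.max_of_nonempty ⟨1, h1s⟩
  have hms := Finset.mem_of_max hm
  simp only [hs, Finset.mem_filter, Finset.mem_Icc] at hms
  obtain ⟨⟨hm1, hm2⟩, hmt⟩ := hms
  refine ⟨m, hm1, hm2, hmt, ?_⟩
  by_contra hlt
  push_neg at hlt
  rcases Nat.eq_or_lt_of_le hm2 with h | h
  · subst h; exact absurd ht.2 (not_le.mpr hlt)
  · have hmem : m + 1 ∈ s := by
      simp only [hs, Finset.mem_filter, Finset.mem_Icc]
      exact ⟨⟨by omega, by omega⟩, by simpa using le_of_lt hlt⟩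
    have : (m + 1 : ℕ) ≤ m := by exact_mod_cast Finset.le_max_of_eq hmem hm
    omega

end aux2

section aux3

variable {x : ℕ → ℝ} {N : ℕ} {f b : ℝ → ℝ} {α : ℕ → ℝ}

lemma RBT_left (hx : ∀ i, i < N → x i < x (i + 1)) (hN : 1 ≤ N) {g : ℝ → ℝ}
    (hg0 : g (x 0) = f (x 0)) (hgN : g (x N) = f (x N))
    (hb0 : b (x 0) = f (x 0)) (hbN : b (x N) = f (x N)) :
    RBT x N f b α g (x 0) = f (x 0) := by
  have h0 : x 0 ∈ Set.Icc (x (1 - 1)) (x 1) := by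
    simp only [Nat.sub_self]
    exact ⟨le_rfl, le_of_lt (xlt hx (by omega) hN)⟩
  rw [RBT_eq hx hN hg0 hgN hb0 hbN le_rfl hN h0]
  have := RBPhi_left hx hN hg0 hb0 (α := α) le_rfl hN
  simpa using this

lemma RBT_right (hx : ∀ i, i < N → x i < x (i + 1)) (hN : 1 ≤ N) {g : ℝ → ℝ}
    (hg0 : g (x 0) = f (x 0)) (hgN : g (x N) = f (x N))
    (hb0 : b (x 0) = f (x 0)) (hbN : b (x N) = f (x N)) :
    RBT x N f b α g (x N) = f (x N) := by
  have h0 : x N ∈ Set.Icc (x (N - 1)) (x N) :=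
    ⟨xle hx (by omega) le_rfl, le_rfl⟩
  rw [RBT_eq hx hN hg0 hgN hb0 hbN hN le_rfl h0]
  exact RBPhi_right hx hN hgN hbN hN le_rfl

/-- Pointwise contraction estimate. -/
lemma RB_pointwise (hx : ∀ i, i < N → x i < x (i + 1)) (hN : 1 ≤ N)
    {g₁ g₂ T₁ T₂ : ℝ → ℝ} {k C : ℝ}
    (hk : ∀ i ∈ Finset.Icc 1 N, |α i| ≤ k) (hk0 : 0 ≤ k)
    (h1 : ∀ i ∈ Finset.Icc 1 N, ∀ t ∈ Set.Icc (x (i - 1)) (x i),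
      T₁ t = f t + α i * (g₁ (Linv x N i t) - b (Linv x N i t)))
    (h2 : ∀ i ∈ Finset.Icc 1 N, ∀ t ∈ Set.Icc (x (i - 1)) (x i),
      T₂ t = f t + α i * (g₂ (Linv x N i t) - b (Linv x N i t)))
    (hC : ∀ s ∈ Set.Icc (x 0) (x N), |g₁ s - g₂ s| ≤ C) :
    ∀ t ∈ Set.Icc (x 0) (x N), |T₁ t - T₂ t| ≤ k * C := by
  intro t ht
  obtain ⟨j, hj1, hj2, hjl, hjr⟩ := exists_piece hx hN ht
  have hjmem : j ∈ Finset.Icc 1 N := Finset.mem_Icc.mpr ⟨hj1, hj2⟩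
  have htp : t ∈ Set.Icc (x (j - 1)) (x j) := ⟨hjl, hjr⟩
  rw [h1 j hjmem t htp, h2 j hjmem t htp]
  have heq : f t + α j * (g₁ (Linv x N j t) - b (Linv x N j t)) -
      (f t + α j * (g₂ (Linv x N j t) - b (Linv x N j t))) =
      α j * (g₁ (Linv x N j t) - g₂ (Linv x N j t)) := by ring
  rw [heq, abs_mul]
  exact mul_le_mul (hk j hjmem) (hC _ (Linv_mem hx hN hj1 hj2 htp)) (abs_nonneg _) hk0

end aux3

theorem RB_operator_contraction (N : ℕ) (hN : 1 ≤ N) (x : ℕ → ℝ)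
    (hx : ∀ i, i < N → x i < x (i + 1))
    (f b : ℝ → ℝ)
    (hf : ContinuousOn f (Set.Icc (x 0) (x N)))
    (hb : ContinuousOn b (Set.Icc (x 0) (x N)))
    (hb0 : b (x 0) = f (x 0)) (hbN : b (x N) = f (x N))
    (α : ℕ → ℝ) (hα : ∀ i ∈ Finset.Icc 1 N, |α i| < 1)
    (hne : (Finset.Icc 1 N).Nonempty) :
    -- (1) T is well defined: Tg is continuous and agrees with f at the endpoints
    (∀ g : ℝ → ℝ, ContinuousOn g (Set.Icc (x 0) (x N)) →
      g (x 0) = f (x 0) → g (x N) = f (x N) →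
      ∃ Tg : ℝ → ℝ, ContinuousOn Tg (Set.Icc (x 0) (x N)) ∧
        Tg (x 0) = f (x 0) ∧ Tg (x N) = f (x N) ∧
        ∀ i ∈ Finset.Icc 1 N, ∀ t ∈ Set.Icc (x (i - 1)) (x i),
          Tg t = f t + α i * (g (Linv x N i t) - b (Linv x N i t))) ∧
    -- (2) T is a contraction in the sup norm with factor max_i |α i| < 1
    ((Finset.Icc 1 N).sup' hne (fun i => |α i|) < 1 ∧
      ∀ g₁ g₂ T₁ T₂ : ℝ → ℝ,
        ContinuousOn g₁ (Set.Icc (x 0) (x N)) →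
        ContinuousOn g₂ (Set.Icc (x 0) (x N)) →
        g₁ (x 0) = f (x 0) → g₁ (x N) = f (x N) →
        g₂ (x 0) = f (x 0) → g₂ (x N) = f (x N) →
        (∀ i ∈ Finset.Icc 1 N, ∀ t ∈ Set.Icc (x (i - 1)) (x i),
          T₁ t = f t + α i * (g₁ (Linv x N i t) - b (Linv x N i t))) →
        (∀ i ∈ Finset.Icc 1 N, ∀ t ∈ Set.Icc (x (i - 1)) (x i),
          T₂ t = f t + α i * (g₂ (Linv x N i t) - b (Linv x N i t))) →
        ∀ C : ℝ, (∀ s ∈ Set.Icc (x 0) (x N), |g₁ s - g₂ s| ≤ C) →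
          ∀ t ∈ Set.Icc (x 0) (x N),
            |T₁ t - T₂ t| ≤ ((Finset.Icc 1 N).sup' hne fun i => |α i|) * C) ∧
    -- (3) T has a fixed point, unique among continuous functions with the endpoint values
    (∃ fα : ℝ → ℝ, (ContinuousOn fα (Set.Icc (x 0) (x N)) ∧
        fα (x 0) = f (x 0) ∧ fα (x N) = f (x N) ∧
        ∀ i ∈ Finset.Icc 1 N, ∀ t ∈ Set.Icc (x (i - 1)) (x i),
          fα t = f t + α i * (fα (Linv x N i t) - b (Linv x N i t))) ∧
      ∀ g : ℝ → ℝ, ContinuousOn g (Set.Icc (x 0) (x N)) →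
        g (x 0) = f (x 0) → g (x N) = f (x N) →
        (∀ i ∈ Finset.Icc 1 N, ∀ t ∈ Set.Icc (x (i - 1)) (x i),
          g t = f t + α i * (g (Linv x N i t) - b (Linv x N i t))) →
        ∀ t ∈ Set.Icc (x 0) (x N), g t = fα t) := by
  set k : ℝ := (Finset.Icc 1 N).sup' hne (fun i => |α i|) with hkdef
  have hk : ∀ i ∈ Finset.Icc 1 N, |α i| ≤ k := fun i hi => Finset.le_sup' (fun i => |α i|) hi
  have hk0 : 0 ≤ k := le_trans (abs_nonneg _) (hk _ hne.choose_spec)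
  have hk1 : k < 1 := (Finset.sup'_lt_iff hne).mpr hα
  have hle : x 0 ≤ x N := le_of_lt (xlt hx (by omega) le_rfl)
  refine ⟨?_, ⟨hk1, ?_⟩, ?_⟩
  · -- part 1
    intro g hg hg0 hgN
    refine ⟨RBT x N f b α g, RBT_cont hx hN hf hb hb0 hbN hg hg0 hgN,
      RBT_left hx hN hg0 hgN hb0 hbN, RBT_right hx hN hg0 hgN hb0 hbN, ?_⟩
    intro i hi t ht
    rw [Finset.mem_Icc] at hi
    rw [RBT_eq hx hN hg0 hgN hb0 hbN hi.1 hi.2 ht, RBPhi]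
  · -- part 2
    intro g₁ g₂ T₁ T₂ _ _ _ _ _ _ h1 h2 C hC
    exact RB_pointwise hx hN hk hk0 h1 h2 hC
  · -- part 3
    set I : Set ℝ := Set.Icc (x 0) (x N) with hI
    have hp0 : x 0 ∈ I := Set.left_mem_Icc.mpr hle
    have hpN : x N ∈ I := Set.right_mem_Icc.mpr hle
    set p0 : I := ⟨x 0, hp0⟩
    set pN : I := ⟨x N, hpN⟩
    set E : Set C(I, ℝ) := {g | g p0 = f (x 0) ∧ g pN = f (x N)} with hE
    have hEclosed : IsClosed E := by
      have h1 : IsClosed {g : C(I, ℝ) | g p0 = f (x 0)} :=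
        isClosed_eq (continuous_eval_const p0) continuous_const
      have h2 : IsClosed {g : C(I, ℝ) | g pN = f (x N)} :=
        isClosed_eq (continuous_eval_const pN) continuous_const
      exact h1.inter h2
    haveI : CompleteSpace E := hEclosed.completeSpace_coe
    haveI : Nonempty E := ⟨⟨⟨I.restrict f, hf.restrict⟩, rfl, rfl⟩⟩
    -- extension of a continuous map on I to ℝ
    set gx : C(I, ℝ) → ℝ → ℝ := fun g t => g (Set.projIcc (x 0) (x N) hle t) with hgx
    have hgx_eq : ∀ (g : C(I, ℝ)) (s : ℝ) (hs : s ∈ I), gx g s = g ⟨s, hs⟩ := by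
      intro g s hs
      simp [hgx, Set.projIcc_of_mem hle hs]
    have hgx_cont : ∀ g : C(I, ℝ), ContinuousOn (gx g) I :=
      fun g => (g.continuous.comp continuous_projIcc).continuousOn
    have hgx0 : ∀ g : E, gx g.1 (x 0) = f (x 0) := by
      intro g; rw [hgx_eq g.1 (x 0) hp0]; exact g.2.1
    have hgxN : ∀ g : E, gx g.1 (x N) = f (x N) := by
      intro g; rw [hgx_eq g.1 (x N) hpN]; exact g.2.2
    -- the operator as a self-map of E
    have hTmem : ∀ g : E, ∀ (hc : Continuous (I.restrict (RBT x N f b α (gx g.1)))),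
        (⟨I.restrict (RBT x N f b α (gx g.1)), hc⟩ : C(I, ℝ)) ∈ E := by
      intro g hc
      constructor
      · exact RBT_left hx hN (hgx0 g) (hgxN g) hb0 hbN
      · exact RBT_right hx hN (hgx0 g) (hgxN g) hb0 hbN
    set F : E → E := fun g =>
      ⟨⟨I.restrict (RBT x N f b α (gx g.1)),
        (RBT_cont hx hN hf hb hb0 hbN (hgx_cont g.1) (hgx0 g) (hgxN g)).restrict⟩,
        hTmem g _⟩ with hF
    have hK0 : (0 : ℝ) ≤ k := hk0
    set K : NNReal := (⟨k, hk0⟩ : NNReal) with hK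
    have hCW : ContractingWith K F := by
      constructor
      · rw [← NNReal.coe_lt_one]; exact hk1
      · apply LipschitzWith.of_dist_le_mul
        intro g₁ g₂
        rw [Subtype.dist_eq, Subtype.dist_eq g₁ g₂]
        have hC : ∀ s ∈ I, |gx g₁.1 s - gx g₂.1 s| ≤ dist g₁.1 g₂.1 := by
          intro s hs
          rw [hgx_eq g₁.1 s hs, hgx_eq g₂.1 s hs, ← Real.dist_eq]
          exact ContinuousMap.dist_apply_le_dist (f := g₁.1) (g := g₂.1) ⟨s, hs⟩
        have key := RB_pointwise (α := α) hx hN hk hk0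
          (g₁ := gx g₁.1) (g₂ := gx g₂.1)
          (T₁ := RBT x N f b α (gx g₁.1)) (T₂ := RBT x N f b α (gx g₂.1))
          (fun i hi t ht => by
            rw [Finset.mem_Icc] at hi
            rw [RBT_eq hx hN (hgx0 g₁) (hgxN g₁) hb0 hbN hi.1 hi.2 ht, RBPhi])
          (fun i hi t ht => by
            rw [Finset.mem_Icc] at hi
            rw [RBT_eq hx hN (hgx0 g₂) (hgxN g₂) hb0 hbN hi.1 hi.2 ht, RBPhi])
          hC
        show dist (F g₁).1 (F g₂).1 ≤ k * dist g₁.1 g₂.1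
        rw [ContinuousMap.dist_le (mul_nonneg hk0 dist_nonneg)]
        intro p
        have := key p.1 p.2
        rw [Real.dist_eq]; exact this
    set fp : E := ContractingWith.fixedPoint F hCW with hfp
    have hfix : F fp = fp := hCW.fixedPoint_isFixedPt
    set fα : ℝ → ℝ := gx fp.1 with hfα
    have hfαc : ContinuousOn fα I := hgx_cont fp.1
    have hfα0 : fα (x 0) = f (x 0) := hgx0 fp
    have hfαN : fα (x N) = f (x N) := hgxN fp
    -- fixed point formula
    have hform : ∀ i ∈ Finset.Icc 1 N, ∀ t ∈ Set.Icc (x (i - 1)) (x i),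
        fα t = f t + α i * (fα (Linv x N i t) - b (Linv x N i t)) := by
      intro i hi t ht
      rw [Finset.mem_Icc] at hi
      have htI : t ∈ I :=
        Set.Icc_subset_Icc (xle hx (by omega) (by omega)) (xle hx hi.2 le_rfl) ht
      have step1 : fα t = fp.1 ⟨t, htI⟩ := hgx_eq fp.1 t htI
      have step2 : fp.1 ⟨t, htI⟩ = (F fp).1 ⟨t, htI⟩ := by rw [hfix]
      have step3 : (F fp).1 ⟨t, htI⟩ = RBT x N f b α (gx fp.1) t := rfl
      rw [step1, step2, step3,
        RBT_eq hx hN (hgx0 fp) (hgxN fp) hb0 hbN hi.1 hi.2 ht, RBPhi]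
    refine ⟨fα, ⟨hfαc, hfα0, hfαN, hform⟩, ?_⟩
    -- uniqueness
    intro g hg hg0 hgN hgform
    have hdiffc : ContinuousOn (fun s => |g s - fα s|) I := (hg.sub hfαc).abs
    obtain ⟨s₀, hs₀I, hs₀max⟩ :=
      isCompact_Icc.exists_isMaxOn ⟨x 0, hp0⟩ hdiffc
    set C : ℝ := |g s₀ - fα s₀| with hC
    have hCb : ∀ s ∈ I, |g s - fα s| ≤ C := fun s hs => hs₀max hs
    have key := RB_pointwise (α := α) hx hN hk hk0 hgform hform hCb
    have hCk : C ≤ k * C := key s₀ hs₀I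
    have hC0 : 0 ≤ C := abs_nonneg _
    have hCzero : C = 0 := by nlinarith
    intro t htI
    have h1 : |g t - fα t| ≤ k * C := key t htI
    rw [hCzero, mul_zero] at h1
    have := abs_nonneg (g t - fα t)
    have : |g t - fα t| = 0 := le_antisymm h1 this
    have := abs_eq_zero.mp this
    linarith
end

section
/- Let f^α be the α-fractal function of continuous f : I = [x₀,x_N] → ℝ with base b (agreeing with f at the endpoints), partition x₀ < ... < x_N, and scale vector α with |α|_∞ = max_i |α_i| < 1. Then ‖f^α − f‖_∞ ≤ (|α|_∞ / (1 − |α|_∞)) ‖f − b‖_∞, where ‖·‖_∞ is the sup norm on C(I). -/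
theorem fractal_perturbation_bound (N : ℕ) (hN : 1 ≤ N) (x : ℕ → ℝ)
    (hx : ∀ i, i < N → x i < x (i + 1))
    (f b : ℝ → ℝ)
    (hf : ContinuousOn f (Set.Icc (x 0) (x N)))
    (hb : ContinuousOn b (Set.Icc (x 0) (x N)))
    (hb0 : b (x 0) = f (x 0)) (hbN : b (x N) = f (x N))
    (α : ℕ → ℝ) (hα : ∀ i ∈ Finset.Icc 1 N, |α i| < 1)
    (hne : (Finset.Icc 1 N).Nonempty)
    (fα : ℝ → ℝ) (hfα : ContinuousOn fα (Set.Icc (x 0) (x N)))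
    (hself : ∀ i ∈ Finset.Icc 1 N, ∀ t ∈ Set.Icc (x (i - 1)) (x i),
      fα t = f t + α i * (fα (Linv x N i t) - b (Linv x N i t))) :
    ∀ t ∈ Set.Icc (x 0) (x N),
      |fα t - f t| ≤
        ((Finset.Icc 1 N).sup' hne (fun i => |α i|) /
            (1 - (Finset.Icc 1 N).sup' hne (fun i => |α i|))) *
          sSup ((fun s => |f s - b s|) '' Set.Icc (x 0) (x N)) := by
  classical
  -- monotonicity of the partition
  have hmono : ∀ j k, j ≤ k → k ≤ N → x j ≤ x k := by
    intro j k hjk hkN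
    induction k with
    | zero =>
      have : j = 0 := Nat.le_zero.mp hjk
      simp [this]
    | succ k ih =>
      rcases Nat.lt_or_ge j (k + 1) with h | h
      · exact (ih (Nat.lt_succ_iff.mp h) (by omega)).trans (hx k (by omega)).le
      · have : j = k + 1 := le_antisymm hjk h
        simp [this]
  have hx0N : x 0 < x N := by
    have h1 : x 0 ≤ x (N - 1) := hmono 0 (N - 1) (Nat.zero_le _) (by omega)
    have h2 : x (N - 1) < x N := by
      have := hx (N - 1) (by omega)
      simpa [Nat.sub_add_cancel hN] using this
    linarith
  have hne0 : x N - x 0 ≠ 0 := by linarith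
  -- subinterval facts
  have hsub : ∀ i ∈ Finset.Icc 1 N, x (i - 1) < x i := by
    intro i hi
    simp only [Finset.mem_Icc] at hi
    have := hx (i - 1) (by omega)
    simpa [Nat.sub_add_cancel hi.1] using this
  have ha : ∀ i ∈ Finset.Icc 1 N, 0 < aCoef x N i := by
    intro i hi
    have := hsub i hi
    exact div_pos (by linarith) (by linarith)
  -- Linv maps [x (i-1), x i] into [x 0, x N]
  have hLinv : ∀ i ∈ Finset.Icc 1 N, ∀ t ∈ Set.Icc (x (i - 1)) (x i),
      Linv x N i t ∈ Set.Icc (x 0) (x N) := by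
    intro i hi t ht
    have hai := ha i hi
    have key1 : x 0 * aCoef x N i + eCoef x N i = x (i - 1) := by
      unfold aCoef eCoef; field_simp; ring
    have key2 : x N * aCoef x N i + eCoef x N i = x i := by
      unfold aCoef eCoef; field_simp; ring
    constructor
    · rw [Linv, le_div_iff₀ hai]
      have := ht.1
      linarith
    · rw [Linv, div_le_iff₀ hai]
      have := ht.2
      linarith
  -- covering lemma
  have hcover : ∀ t ∈ Set.Icc (x 0) (x N),
      ∃ i ∈ Finset.Icc 1 N, t ∈ Set.Icc (x (i - 1)) (x i) := by
    intro t ht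
    have hP : ∃ j, t ≤ x j ∧ 1 ≤ j ∧ j ≤ N := ⟨N, ht.2, hN, le_rfl⟩
    set i := Nat.find hP with hidef
    obtain ⟨h1, h2, h3⟩ := Nat.find_spec hP
    refine ⟨i, Finset.mem_Icc.mpr ⟨h2, h3⟩, ?_, h1⟩
    rcases Nat.eq_or_lt_of_le h2 with h | h
    · have : i - 1 = 0 := by omega
      rw [this]; exact ht.1
    · by_contra hcon
      push_neg at hcon
      exact (Nat.find_min hP (show i - 1 < i by omega)) ⟨hcon.le, by omega, by omega⟩
  -- constants
  set A := (Finset.Icc 1 N).sup' hne (fun i => |α i|) with hAdef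
  obtain ⟨i0, hi0⟩ := hne
  have hA0 : 0 ≤ A := le_trans (abs_nonneg (α i0)) (Finset.le_sup' (fun i => |α i|) hi0)
  have hA1 : A < 1 := by
    rw [hAdef]
    exact (Finset.sup'_lt_iff _).mpr hα
  have h1A : 0 < 1 - A := by linarith
  set E := sSup ((fun s => |f s - b s|) '' Set.Icc (x 0) (x N)) with hEdef
  have hEcomp : IsCompact ((fun s => |f s - b s|) '' Set.Icc (x 0) (x N)) :=
    isCompact_Icc.image_of_continuousOn ((hf.sub hb).abs)
  have hEbdd : BddAbove ((fun s => |f s - b s|) '' Set.Icc (x 0) (x N)) := hEcomp.bddAbove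
  have hEle : ∀ s ∈ Set.Icc (x 0) (x N), |f s - b s| ≤ E :=
    fun s hs => le_csSup hEbdd ⟨s, hs, rfl⟩
  set D := sSup ((fun s => |fα s - f s|) '' Set.Icc (x 0) (x N)) with hDdef
  have hDcomp : IsCompact ((fun s => |fα s - f s|) '' Set.Icc (x 0) (x N)) :=
    isCompact_Icc.image_of_continuousOn ((hfα.sub hf).abs)
  have hDbdd : BddAbove ((fun s => |fα s - f s|) '' Set.Icc (x 0) (x N)) := hDcomp.bddAbove
  have hDle : ∀ s ∈ Set.Icc (x 0) (x N), |fα s - f s| ≤ D :=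
    fun s hs => le_csSup hDbdd ⟨s, hs, rfl⟩
  -- key pointwise bound
  have key : ∀ t ∈ Set.Icc (x 0) (x N), |fα t - f t| ≤ A * (D + E) := by
    intro t ht
    obtain ⟨i, hi, hti⟩ := hcover t ht
    have hs := hLinv i hi _ hti
    set s := Linv x N i t
    have heq : fα t - f t = α i * (fα s - b s) := by
      rw [hself i hi t hti]; ring
    rw [heq, abs_mul]
    have htri : |fα s - b s| ≤ |fα s - f s| + |f s - b s| := by
      have : fα s - b s = (fα s - f s) + (f s - b s) := by ring
      rw [this]; exact abs_add_le _ _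
    have hαA : |α i| ≤ A := Finset.le_sup' (fun i => |α i|) hi
    have hb1 : |fα s - f s| ≤ D := hDle s hs
    have hb2 : |f s - b s| ≤ E := hEle s hs
    have h1 : |fα s - b s| ≤ D + E := by linarith
    have h2 : 0 ≤ |fα s - b s| := abs_nonneg _
    calc |α i| * |fα s - b s| ≤ A * |fα s - b s| := by
          exact mul_le_mul_of_nonneg_right hαA h2
      _ ≤ A * (D + E) := by exact mul_le_mul_of_nonneg_left h1 hA0
  -- sup bound
  have hD : D ≤ A * (D + E) := by
    apply csSup_le
    · exact ⟨|fα (x 0) - f (x 0)|, ⟨x 0, ⟨le_rfl, hx0N.le⟩, rfl⟩⟩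
    · rintro _ ⟨t, ht, rfl⟩
      exact key t ht
  have hE0 : 0 ≤ E := le_trans (abs_nonneg _) (hEle (x 0) ⟨le_rfl, hx0N.le⟩)
  have hfinal : D ≤ A / (1 - A) * E := by
    rw [div_mul_eq_mul_div, le_div_iff₀ h1A]
    nlinarith
  intro t ht
  exact le_trans (hDle t ht) hfinal
end

section
/- Let f, b : [0,1] → ℝ be continuous with b(0) = f(0) and b(1) = f(1), and consider the uniform partition of [0,1] into N equal parts. For scale vectors α with all |α_i| < 1, set λ(α) = (1/N) Σ_{i=1}^N α_i. Then the map α ↦ ∫_0^1 f^α(x) dx, where f^α is the α-fractal function of f with base b, depends on α only through λ(α), equals (∫_0^1 f − λ ∫_0^1 b)/(1 − λ), and is a continuous (in fact real-analytic) function of λ on (−1, 1). -/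
lemma my_aux (N : ℕ) (hN : 1 ≤ N)
    (f b : ℝ → ℝ)
    (hf : ContinuousOn f (Set.Icc 0 1))
    (hb : ContinuousOn b (Set.Icc 0 1))
    (α : ℕ → ℝ) (hα : ∀ i ∈ Finset.Icc 1 N, |α i| < 1)
    (fα : ℝ → ℝ) (hfα : ContinuousOn fα (Set.Icc 0 1))
    (heq : ∀ i ∈ Finset.Icc 1 N, ∀ t ∈ Set.Icc (((i : ℝ) - 1) / N) ((i : ℝ) / N),
          fα t = f t + α i * (fα ((N : ℝ) * t - ((i : ℝ) - 1)) -
            b ((N : ℝ) * t - ((i : ℝ) - 1)))) :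
    ∫ t in (0 : ℝ)..1, fα t =
          ((∫ t in (0 : ℝ)..1, f t) -
              ((1 / (N : ℝ)) * ∑ i ∈ Finset.Icc 1 N, α i) * ∫ t in (0 : ℝ)..1, b t) /
            (1 - (1 / (N : ℝ)) * ∑ i ∈ Finset.Icc 1 N, α i) := by
  have hNpos : (0 : ℝ) < N := by exact_mod_cast hN
  have hNne : (N : ℝ) ≠ 0 := ne_of_gt hNpos
  set g : ℝ → ℝ := fun t => fα t - b t with hg
  have hgc : ContinuousOn g (Set.Icc 0 1) := hfα.sub hb
  have hle : ∀ k : ℕ, (k : ℝ)/N ≤ ((k:ℝ)+1)/N := by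
    intro k
    exact (div_le_div_iff_of_pos_right hNpos).mpr (by linarith)
  have hsub : ∀ k : ℕ, k < N → Set.Icc ((k : ℝ)/N) (((k:ℝ)+1)/N) ⊆ Set.Icc 0 1 := by
    intro k hk
    apply Set.Icc_subset_Icc
    · positivity
    · rw [div_le_one hNpos]
      have : (k : ℝ) + 1 ≤ N := by exact_mod_cast hk
      linarith
  have hmaps : ∀ k : ℕ, k < N → ∀ t ∈ Set.Icc ((k : ℝ)/N) (((k:ℝ)+1)/N),
      (N : ℝ) * t - k ∈ Set.Icc (0:ℝ) 1 := by
    intro k hk t ht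
    obtain ⟨h1, h2⟩ := ht
    have h1' : (k : ℝ) ≤ t * N := (div_le_iff₀ hNpos).mp h1
    have h2' : t * N ≤ (k : ℝ) + 1 := (le_div_iff₀ hNpos).mp h2
    constructor <;> nlinarith
  -- interval integrability of the pieces
  have hint_fα : ∀ k : ℕ, k < N → IntervalIntegrable fα MeasureTheory.volume ((k:ℝ)/N) (((k:ℝ)+1)/N) := by
    intro k hk
    apply ContinuousOn.intervalIntegrable
    rw [Set.uIcc_of_le (hle k)]
    exact hfα.mono (hsub k hk)
  have hint_f : ∀ k : ℕ, k < N → IntervalIntegrable f MeasureTheory.volume ((k:ℝ)/N) (((k:ℝ)+1)/N) := by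
    intro k hk
    apply ContinuousOn.intervalIntegrable
    rw [Set.uIcc_of_le (hle k)]
    exact hf.mono (hsub k hk)
  -- key per-piece computation
  have hpiece : ∀ k : ℕ, k < N →
      (∫ t in ((k:ℝ)/N)..(((k:ℝ)+1)/N), fα t) =
        (∫ t in ((k:ℝ)/N)..(((k:ℝ)+1)/N), f t) +
          α (k+1) * ((N:ℝ)⁻¹ * ∫ u in (0:ℝ)..1, g u) := by
    intro k hk
    have hmem : k + 1 ∈ Finset.Icc 1 N := by
      simp [Finset.mem_Icc]; omega
    have hEq : Set.EqOn fα (fun t => f t + α (k+1) * g ((N:ℝ) * t - k))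
        (Set.uIcc ((k:ℝ)/N) (((k:ℝ)+1)/N)) := by
      rw [Set.uIcc_of_le (hle k)]
      intro t ht
      have := heq (k+1) hmem t (by push_cast; simpa using ht)
      push_cast at this
      simpa [hg] using this
    rw [intervalIntegral.integral_congr hEq]
    have hintg : IntervalIntegrable (fun t => α (k+1) * g ((N:ℝ) * t - k))
        MeasureTheory.volume ((k:ℝ)/N) (((k:ℝ)+1)/N) := by
      apply ContinuousOn.intervalIntegrable
      rw [Set.uIcc_of_le (hle k)]
      apply ContinuousOn.mul continuousOn_const
      apply hgc.comp (Continuous.continuousOn (by continuity))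
      intro t ht
      exact hmaps k hk t ht
    rw [intervalIntegral.integral_add (hint_f k hk) hintg,
      intervalIntegral.integral_const_mul]
    congr 1
    have hcomp : ∀ t : ℝ, g ((N:ℝ) * t - k) = g ((N:ℝ) * t + (-(k:ℝ))) := by
      intro t; ring_nf
    simp_rw [hcomp]
    rw [intervalIntegral.integral_comp_mul_add g hNne (-(k:ℝ))]
    have e1 : (N:ℝ) * ((k:ℝ)/N) + (-(k:ℝ)) = 0 := by field_simp; ring
    have e2 : (N:ℝ) * (((k:ℝ)+1)/N) + (-(k:ℝ)) = 1 := by field_simp; ring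
    rw [e1, e2]
    simp [smul_eq_mul]
  -- sum the pieces
  have a_def : ∀ k : ℕ, ((k:ℝ)/N : ℝ) = (fun n : ℕ => (n:ℝ)/N) k := fun _ => rfl
  have hsum_fα : ∑ k ∈ Finset.range N, (∫ t in ((k:ℝ)/N)..(((k:ℝ)+1)/N), fα t)
      = ∫ t in (0:ℝ)..1, fα t := by
    have := intervalIntegral.sum_integral_adjacent_intervals
      (a := fun n : ℕ => (n:ℝ)/N) (n := N) (f := fα) (μ := MeasureTheory.volume)
      (by intro k hk; push_cast; exact hint_fα k hk)
    simp only [Nat.cast_zero, zero_div, Nat.cast_succ] at this ⊢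
    rw [div_self hNne] at this
    exact this
  have hsum_f : ∑ k ∈ Finset.range N, (∫ t in ((k:ℝ)/N)..(((k:ℝ)+1)/N), f t)
      = ∫ t in (0:ℝ)..1, f t := by
    have := intervalIntegral.sum_integral_adjacent_intervals
      (a := fun n : ℕ => (n:ℝ)/N) (n := N) (f := f) (μ := MeasureTheory.volume)
      (by intro k hk; push_cast; exact hint_f k hk)
    simp only [Nat.cast_zero, zero_div, Nat.cast_succ] at this ⊢
    rw [div_self hNne] at this
    exact this
  have h01 : Set.uIcc (0:ℝ) 1 = Set.Icc 0 1 := Set.uIcc_of_le zero_le_one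
  have hIfα : IntervalIntegrable fα MeasureTheory.volume 0 1 :=
    ContinuousOn.intervalIntegrable (by rw [h01]; exact hfα)
  have hIb : IntervalIntegrable b MeasureTheory.volume 0 1 :=
    ContinuousOn.intervalIntegrable (by rw [h01]; exact hb)
  have hG : (∫ u in (0:ℝ)..1, g u) = (∫ t in (0:ℝ)..1, fα t) - ∫ t in (0:ℝ)..1, b t :=
    intervalIntegral.integral_sub hIfα hIb
  set I := ∫ t in (0:ℝ)..1, fα t with hI
  set F := ∫ t in (0:ℝ)..1, f t with hF
  set B := ∫ t in (0:ℝ)..1, b t with hB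
  set S := ∑ i ∈ Finset.Icc 1 N, α i with hS
  have hreindex : ∑ k ∈ Finset.range N, α (k+1) = S := by
    rw [hS, ← Finset.Ico_add_one_right_eq_Icc, Finset.sum_Ico_eq_sum_range]
    simp [add_comm]
  have hkey : I = F + ((1/(N:ℝ)) * S) * (I - B) := by
    calc I = ∑ k ∈ Finset.range N, (∫ t in ((k:ℝ)/N)..(((k:ℝ)+1)/N), fα t) := hsum_fα.symm
    _ = ∑ k ∈ Finset.range N, ((∫ t in ((k:ℝ)/N)..(((k:ℝ)+1)/N), f t) +
          α (k+1) * ((N:ℝ)⁻¹ * ∫ u in (0:ℝ)..1, g u)) := by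
        apply Finset.sum_congr rfl
        intro k hk
        exact hpiece k (Finset.mem_range.mp hk)
    _ = F + (∑ k ∈ Finset.range N, α (k+1)) * ((N:ℝ)⁻¹ * ∫ u in (0:ℝ)..1, g u) := by
        rw [Finset.sum_add_distrib, hsum_f, ← Finset.sum_mul]
    _ = F + ((1/(N:ℝ)) * S) * (I - B) := by
        rw [hreindex, hG]
        ring
  have hSlt : |S| < N := by
    have hne : (Finset.Icc 1 N).Nonempty := by
      rw [Finset.nonempty_Icc]; exact hN
    calc |S| ≤ ∑ i ∈ Finset.Icc 1 N, |α i| := Finset.abs_sum_le_sum_abs _ _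
    _ < ∑ i ∈ Finset.Icc 1 N, (1:ℝ) := Finset.sum_lt_sum_of_nonempty hne hα
    _ = N := by simp [Nat.card_Icc]
  have hLlt : |(1/(N:ℝ)) * S| < 1 := by
    rw [abs_mul, abs_of_pos (by positivity : (0:ℝ) < 1/(N:ℝ))]
    rw [div_mul_eq_mul_div, one_mul, div_lt_one hNpos]
    exact hSlt
  have hLlt1 : (1/(N:ℝ)) * S < 1 := lt_of_le_of_lt (le_abs_self _) hLlt
  have hden : 1 - (1/(N:ℝ)) * S ≠ 0 := by linarith
  rw [eq_div_iff hden]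
  linear_combination hkey



theorem integral_depends_only_on_lambda (N : ℕ) (hN : 1 ≤ N)
    (f b : ℝ → ℝ)
    (hf : ContinuousOn f (Set.Icc 0 1))
    (hb : ContinuousOn b (Set.Icc 0 1))
    (hb0 : b 0 = f 0) (hb1 : b 1 = f 1) :
    -- (1) the integral of `f^α` is given by a formula in `λ(α) = (1/N) ∑ α i`
    (∀ α : ℕ → ℝ, (∀ i ∈ Finset.Icc 1 N, |α i| < 1) →
      ∀ fα : ℝ → ℝ, ContinuousOn fα (Set.Icc 0 1) →
        (∀ i ∈ Finset.Icc 1 N, ∀ t ∈ Set.Icc (((i : ℝ) - 1) / N) ((i : ℝ) / N),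
          fα t = f t + α i * (fα ((N : ℝ) * t - ((i : ℝ) - 1)) -
            b ((N : ℝ) * t - ((i : ℝ) - 1)))) →
        ∫ t in (0 : ℝ)..1, fα t =
          ((∫ t in (0 : ℝ)..1, f t) -
              ((1 / (N : ℝ)) * ∑ i ∈ Finset.Icc 1 N, α i) * ∫ t in (0 : ℝ)..1, b t) /
            (1 - (1 / (N : ℝ)) * ∑ i ∈ Finset.Icc 1 N, α i)) ∧
    -- (2) hence it depends on `α` only through `λ(α)`
    (∀ α β : ℕ → ℝ, (∀ i ∈ Finset.Icc 1 N, |α i| < 1) →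
      (∀ i ∈ Finset.Icc 1 N, |β i| < 1) →
      (∑ i ∈ Finset.Icc 1 N, α i) = (∑ i ∈ Finset.Icc 1 N, β i) →
      ∀ fα fβ : ℝ → ℝ, ContinuousOn fα (Set.Icc 0 1) → ContinuousOn fβ (Set.Icc 0 1) →
        (∀ i ∈ Finset.Icc 1 N, ∀ t ∈ Set.Icc (((i : ℝ) - 1) / N) ((i : ℝ) / N),
          fα t = f t + α i * (fα ((N : ℝ) * t - ((i : ℝ) - 1)) -
            b ((N : ℝ) * t - ((i : ℝ) - 1)))) →
        (∀ i ∈ Finset.Icc 1 N, ∀ t ∈ Set.Icc (((i : ℝ) - 1) / N) ((i : ℝ) / N),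
          fβ t = f t + β i * (fβ ((N : ℝ) * t - ((i : ℝ) - 1)) -
            b ((N : ℝ) * t - ((i : ℝ) - 1)))) →
        ∫ t in (0 : ℝ)..1, fα t = ∫ t in (0 : ℝ)..1, fβ t) ∧
    -- (3) the formula is continuous, indeed real-analytic, in `λ` on `(-1, 1)`
    ContinuousOn
      (fun l : ℝ => ((∫ t in (0 : ℝ)..1, f t) - l * ∫ t in (0 : ℝ)..1, b t) / (1 - l))
      (Set.Ioo (-1) 1) ∧
    AnalyticOnNhd ℝ
      (fun l : ℝ => ((∫ t in (0 : ℝ)..1, f t) - l * ∫ t in (0 : ℝ)..1, b t) / (1 - l))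
      (Set.Ioo (-1) 1) := by
  have hden : ∀ l ∈ Set.Ioo (-1:ℝ) 1, (1:ℝ) - l ≠ 0 := by
    intro l hl
    have := hl.2
    intro h
    linarith
  have hA : AnalyticOnNhd ℝ
      (fun l : ℝ => ((∫ t in (0 : ℝ)..1, f t) - l * ∫ t in (0 : ℝ)..1, b t) / (1 - l))
      (Set.Ioo (-1) 1) := by
    apply AnalyticOnNhd.div
    · exact (analyticOnNhd_const).sub ((analyticOnNhd_id).mul analyticOnNhd_const)
    · exact (analyticOnNhd_const).sub analyticOnNhd_id
    · exact hden
  refine ⟨?_, ?_, hA.continuousOn, hA⟩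
  · intro α hα fα hfα heq
    exact my_aux N hN f b hf hb α hα fα hfα heq
  · intro α β hα hβ hsum fα fβ hfα hfβ heqα heqβ
    rw [my_aux N hN f b hf hb α hα fα hfα heqα,
      my_aux N hN f b hf hb β hβ fβ hfβ heqβ, hsum]
end
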